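/- Let M₁, M₂, M₃ be real m×m matrices, and define the 3m×3m block matrices A = [[I,0,0],[M₁,0,0],[M₁,0,0]], B = [[0,M₂,0],[0,I,0],[0,0,0]], C = [[0,0,M₃],[0,0,0],[0,0,I]] (blocks of size m×m, I the m×m identity). Then Σ = {A, B, C} is LCP, RCP and transversal if and only if there exist constants C₀ > 0 and 0 ≤ q < 1 such that every product of k factors, each factor equal to M₂M₁ or to M₃M₁, has matrix norm at most C₀ qᵏ, for all k ≥ 1. -/

import Mathlib

open Filter Topology Matrix

attribute [local instance] Matrix.normedAddCommGroup

/-- Left products `L_m = A_{j_m} ⋯ A_{j_1}` (with `L_0 = I`). -/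
noncomputable def leftProd {ι : Type*} [Fintype ι] [DecidableEq ι] {k : ℕ}
    (A : Fin k → Matrix ι ι ℝ) (j : ℕ → Fin k) : ℕ → Matrix ι ι ℝ
  | 0 => 1
  | m + 1 => A (j m) * leftProd A j m

/-- Right products `R_m = A_{j_1} ⋯ A_{j_m}` (with `R_0 = I`). -/
noncomputable def rightProd {ι : Type*} [Fintype ι] [DecidableEq ι] {k : ℕ}
    (A : Fin k → Matrix ι ι ℝ) (j : ℕ → Fin k) : ℕ → Matrix ι ι ℝ
  | 0 => 1
  | m + 1 => rightProd A j m * A (j m)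

/-- Σ is LCP: for every sequence of indices the left products converge. -/
def IsLCP {ι : Type*} [Fintype ι] [DecidableEq ι] {k : ℕ}
    (A : Fin k → Matrix ι ι ℝ) : Prop :=
  ∀ j : ℕ → Fin k, ∃ L : Matrix ι ι ℝ, Tendsto (leftProd A j) atTop (𝓝 L)

/-- Σ is RCP: for every sequence of indices the right products converge. -/
def IsRCP {ι : Type*} [Fintype ι] [DecidableEq ι] {k : ℕ}
    (A : Fin k → Matrix ι ι ℝ) : Prop :=
  ∀ j : ℕ → Fin k, ∃ R : Matrix ι ι ℝ, Tendsto (rightProd A j) atTop (𝓝 R)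

/-- `N_{J'} = ∩_{j ∈ J'} ker (I - A_j)`. -/
noncomputable def Nspace {ι : Type*} [Fintype ι] [DecidableEq ι] {k : ℕ}
    (A : Fin k → Matrix ι ι ℝ) (J' : Set (Fin k)) : Submodule ℝ (ι → ℝ) :=
  ⨅ j ∈ J', LinearMap.ker (Matrix.mulVecLin (1 - A j))

/-- `R_{J'} = span of ∪_{j ∈ J'} range (I - A_j)`. -/
noncomputable def Rspace {ι : Type*} [Fintype ι] [DecidableEq ι] {k : ℕ}
    (A : Fin k → Matrix ι ι ℝ) (J' : Set (Fin k)) : Submodule ℝ (ι → ℝ) :=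
  ⨆ j ∈ J', LinearMap.range (Matrix.mulVecLin (1 - A j))

/-- Σ is transversal: `N_{J'} ⊕ R_{J'} = ℝⁿ` for every `J' ⊆ J`. -/
def IsTransversal {ι : Type*} [Fintype ι] [DecidableEq ι] {k : ℕ}
    (A : Fin k → Matrix ι ι ℝ) : Prop :=
  ∀ J' : Set (Fin k), Nspace A J' ⊓ Rspace A J' = ⊥ ∧ Nspace A J' ⊔ Rspace A J' = ⊤

/-- The block matrix `A = [[I,0,0],[M₁,0,0],[M₁,0,0]]` (blocks of size m×m). -/
noncomputable def blkA {m : ℕ} (M₁ : Matrix (Fin m) (Fin m) ℝ) :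
    Matrix (Fin 3 × Fin m) (Fin 3 × Fin m) ℝ := fun p q =>
  if q.1 = 0 then
    (if p.1 = 0 then (1 : Matrix (Fin m) (Fin m) ℝ) p.2 q.2 else M₁ p.2 q.2)
  else 0

/-- The block matrix `B = [[0,M₂,0],[0,I,0],[0,0,0]]` (blocks of size m×m). -/
noncomputable def blkB {m : ℕ} (M₂ : Matrix (Fin m) (Fin m) ℝ) :
    Matrix (Fin 3 × Fin m) (Fin 3 × Fin m) ℝ := fun p q =>
  if q.1 = 1 then
    (if p.1 = 0 then M₂ p.2 q.2
     else if p.1 = 1 then (1 : Matrix (Fin m) (Fin m) ℝ) p.2 q.2 else 0)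
  else 0

/-- The block matrix `C = [[0,0,M₃],[0,0,0],[0,0,I]]` (blocks of size m×m). -/
noncomputable def blkC {m : ℕ} (M₃ : Matrix (Fin m) (Fin m) ℝ) :
    Matrix (Fin 3 × Fin m) (Fin 3 × Fin m) ℝ := fun p q =>
  if q.1 = 2 then
    (if p.1 = 0 then M₃ p.2 q.2
     else if p.1 = 2 then (1 : Matrix (Fin m) (Fin m) ℝ) p.2 q.2 else 0)
  else 0


namespace BlockCP

open scoped Classical


lemma norm_mul_le_card {α β γ : Type*} [Fintype α] [Fintype β] [Fintype γ]
    (A : Matrix α β ℝ) (B : Matrix β γ ℝ) :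
    ‖A * B‖ ≤ (Fintype.card β : ℝ) * ‖A‖ * ‖B‖ := by
  have h0 : (0:ℝ) ≤ (Fintype.card β : ℝ) * ‖A‖ * ‖B‖ := by positivity
  rw [Matrix.norm_le_iff h0]
  intro i j
  rw [Matrix.mul_apply]
  calc ‖∑ k, A i k * B k j‖ ≤ ∑ k, ‖A i k * B k j‖ := norm_sum_le _ _
    _ ≤ ∑ _k : β, ‖A‖ * ‖B‖ := by
        refine Finset.sum_le_sum fun k _ => ?_
        rw [norm_mul]
        exact mul_le_mul (Matrix.norm_entry_le_entrywise_sup_norm A)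
          (Matrix.norm_entry_le_entrywise_sup_norm B) (norm_nonneg _) (norm_nonneg _)
    _ = (Fintype.card β : ℝ) * ‖A‖ * ‖B‖ := by
        rw [Finset.sum_const, Finset.card_univ, nsmul_eq_mul, mul_assoc]

lemma norm_one_le {α : Type*} [Fintype α] [DecidableEq α] :
    ‖(1 : Matrix α α ℝ)‖ ≤ 1 := by
  rw [Matrix.norm_le_iff zero_le_one]
  intro i j
  rw [Matrix.one_apply]
  split <;> simp

/-- scaled norm, submultiplicative as long as all the "middle" cardinalities
are at most `c`. -/
noncomputable def nv (c : ℝ) {α β : Type*} [Fintype α] [Fintype β]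
    (A : Matrix α β ℝ) : ℝ := c * ‖A‖

lemma nv_nonneg {c : ℝ} (hc : 0 ≤ c) {α β : Type*} [Fintype α] [Fintype β]
    (A : Matrix α β ℝ) : 0 ≤ nv c A := mul_nonneg hc (norm_nonneg _)

lemma norm_le_nv {c : ℝ} (hc : 1 ≤ c) {α β : Type*} [Fintype α] [Fintype β]
    (A : Matrix α β ℝ) : ‖A‖ ≤ nv c A := by
  have := norm_nonneg A
  calc ‖A‖ = 1 * ‖A‖ := (one_mul _).symm
    _ ≤ c * ‖A‖ := by nlinarith

lemma nv_mul_le {c : ℝ} {α β γ : Type*} [Fintype α] [Fintype β] [Fintype γ]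
    (hcard : (Fintype.card β : ℝ) ≤ c)
    (A : Matrix α β ℝ) (B : Matrix β γ ℝ) :
    nv c (A * B) ≤ nv c A * nv c B := by
  have h := norm_mul_le_card A B
  have hc : 0 ≤ c := le_trans (Nat.cast_nonneg _) hcard
  unfold nv
  have h2 : c * ‖A * B‖ ≤ c * ((Fintype.card β : ℝ) * ‖A‖ * ‖B‖) := by
    exact mul_le_mul_of_nonneg_left h hc
  refine h2.trans ?_
  have := norm_nonneg A; have := norm_nonneg B
  nlinarith [mul_le_mul_of_nonneg_right hcard (mul_nonneg (norm_nonneg A) (norm_nonneg B))]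

lemma nv_one_le {c : ℝ} (hc : 0 ≤ c) {α : Type*} [Fintype α] [DecidableEq α] :
    nv c (1 : Matrix α α ℝ) ≤ c := by
  unfold nv
  calc c * ‖(1 : Matrix α α ℝ)‖ ≤ c * 1 := mul_le_mul_of_nonneg_left norm_one_le hc
    _ = c := mul_one c



variable {m : ℕ}

/-- block column injections -/
def Ee (m : ℕ) (i : Fin 3) : Matrix (Fin 3 × Fin m) (Fin m) ℝ :=
  fun p q => if p.1 = i ∧ p.2 = q then 1 else 0

variable (M₁ M₂ M₃ : Matrix (Fin m) (Fin m) ℝ)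

/-- the column parts of the three block matrices -/
noncomputable def uu : Fin 3 → Matrix (Fin 3 × Fin m) (Fin m) ℝ :=
  ![Ee m 0 + Ee m 1 * M₁ + Ee m 2 * M₁, Ee m 0 * M₂ + Ee m 1, Ee m 0 * M₃ + Ee m 2]

/-- the transition matrices -/
noncomputable def Tm : Fin 3 → Fin 3 → Matrix (Fin m) (Fin m) ℝ := fun x y =>
  if x = y then 1 else if x = 0 then (if y = 1 then M₂ else M₃)
  else if y = 0 then M₁ else 0

lemma Ee_mul_apply (M : Matrix (Fin m) (Fin m) ℝ) (i : Fin 3) (p : Fin 3 × Fin m)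
    (q : Fin m) : (Ee m i * M) p q = if p.1 = i then M p.2 q else 0 := by
  rw [Matrix.mul_apply]
  simp only [Ee, ite_and, ite_mul, one_mul, zero_mul]
  by_cases h : p.1 = i
  · simp [h]
  · simp [h]

lemma mul_EeT_apply {α : Type*} [Fintype α] (Y : Matrix α (Fin m) ℝ) (j : Fin 3)
    (p : α) (q : Fin 3 × Fin m) :
    (Y * (Ee m j)ᵀ) p q = if q.1 = j then Y p q.2 else 0 := by
  rw [Matrix.mul_apply]
  simp only [Matrix.transpose_apply, Ee, ite_and, mul_ite, mul_one, mul_zero]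
  by_cases h : q.1 = j
  · simp [h, eq_comm]
  · simp [h]

lemma EeT_mul_apply {γ : Type*} [Fintype γ] (Z : Matrix (Fin 3 × Fin m) γ ℝ)
    (i : Fin 3) (q : Fin m) (r : γ) : ((Ee m i)ᵀ * Z) q r = Z (i, q) r := by
  rw [Matrix.mul_apply, Fintype.sum_prod_type]
  simp only [Matrix.transpose_apply, Ee, ite_and, ite_mul, one_mul, zero_mul]
  rw [Finset.sum_eq_single i]
  · simp
  · intro b _ hb; simp [hb]
  · simp

lemma EeT_mul_Ee (i j : Fin 3) :
    (Ee m i)ᵀ * Ee m j = if i = j then (1 : Matrix (Fin m) (Fin m) ℝ) else 0 := by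
  ext q r
  rw [EeT_mul_apply]
  by_cases h : i = j
  · simp [Ee, h, Matrix.one_apply]
  · simp [Ee, h, Ne.symm h]

lemma EeT_mul_uu (x y : Fin 3) : (Ee m x)ᵀ * uu M₁ M₂ M₃ y = Tm M₁ M₂ M₃ x y := by
  fin_cases x <;> fin_cases y <;>
    simp [uu, Tm, Matrix.mul_add, ← Matrix.mul_assoc, EeT_mul_Ee, Matrix.one_mul,
      Matrix.zero_mul]

lemma blk_eq_uu_mul (x : Fin 3) :
    (![blkA M₁, blkB M₂, blkC M₃] : Fin 3 → _) x = uu M₁ M₂ M₃ x * (Ee m x)ᵀ := by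
  fin_cases x <;>
  · ext ⟨a, p⟩ ⟨b, q⟩
    rw [mul_EeT_apply]
    simp only [uu, Matrix.cons_val_zero, Matrix.cons_val_one,
      Matrix.head_cons, Matrix.add_apply]
    fin_cases a <;> fin_cases b <;>
      simp [blkA, blkB, blkC, Ee, Ee_mul_apply, Matrix.one_apply]



section Core

variable {W : Type*} [Fintype W] [DecidableEq W]
variable (g : Bool → Matrix W W ℝ)

/-- product of a word, `head` = first applied (i.e. rightmost factor). -/
noncomputable def mp (l : List Bool) : Matrix W W ℝ := ((l.map g).reverse).prod

lemma mp_nil : mp g [] = 1 := by simp [mp]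

lemma mp_append (l₁ l₂ : List Bool) : mp g (l₁ ++ l₂) = mp g l₂ * mp g l₁ := by
  simp [mp, List.reverse_append, List.prod_append]

lemma mp_concat (l : List Bool) (b : Bool) : mp g (l ++ [b]) = g b * mp g l := by
  rw [mp_append]; simp [mp]

/-- partial products of an infinite word. -/
noncomputable def pps (σ : ℕ → Bool) (n : ℕ) : Matrix W W ℝ :=
  mp g (List.ofFn fun i : Fin n => σ i)

lemma pps_zero (σ : ℕ → Bool) : pps g σ 0 = 1 := by simp [pps, mp]

lemma pps_succ (σ : ℕ → Bool) (n : ℕ) :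
    pps g σ (n + 1) = g (σ n) * pps g σ n := by
  rw [pps, List.ofFn_succ', List.concat_eq_append, mp_concat]
  simp [pps]

/-- König's lemma for binary trees of words. -/
lemma koenig (T : Set (List Bool))
    (hpc : ∀ ⦃l₁ l₂ : List Bool⦄, l₁ <+: l₂ → l₂ ∈ T → l₁ ∈ T)
    (hlong : ∀ L : ℕ, ∃ l ∈ T, L ≤ l.length) :
    ∃ σ : ℕ → Bool, ∀ n : ℕ, (List.ofFn fun i : Fin n => σ i) ∈ T := by
  set good : List Bool → Prop :=
    fun p => ∀ L : ℕ, ∃ l ∈ T, p <+: l ∧ L ≤ l.length with hgood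
  have h0 : good [] := by
    intro L
    obtain ⟨l, hl, hL⟩ := hlong L
    exact ⟨l, hl, by simp, hL⟩
  have hstep : ∀ p, good p → ∃ b, good (p ++ [b]) := by
    intro p hp
    by_contra hcon
    push_neg at hcon
    have hcon' : ∀ b : Bool, ∃ L : ℕ, ∀ l ∈ T, (p ++ [b]) <+: l → l.length < L := by
      intro b
      have hb := hcon b
      simp only [hgood] at hb
      push_neg at hb
      exact hb
    obtain ⟨L₁, hL₁⟩ := hcon' true
    obtain ⟨L₂, hL₂⟩ := hcon' false
    obtain ⟨l, hlT, hpre, hlen⟩ := hp (max (max L₁ L₂) (p.length + 1))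
    -- l properly extends p
    obtain ⟨t, ht⟩ := hpre
    have htne : t ≠ [] := by
      intro h
      rw [h, List.append_nil] at ht
      subst ht
      omega
    obtain ⟨b, t', rfl⟩ := List.exists_cons_of_ne_nil htne
    have hpre' : p ++ [b] <+: l := by
      rw [← ht]
      refine ⟨t', by simp⟩
    rcases b with _ | _
    · exact absurd hlen (by have := hL₂ l hlT hpre'; omega)
    · exact absurd hlen (by have := hL₁ l hlT hpre'; omega)
  -- build the chain
  let F : ℕ → {p : List Bool // good p} := fun n =>
    Nat.rec ⟨[], h0⟩
      (fun _ q => ⟨q.1 ++ [Classical.choose (hstep q.1 q.2)],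
        Classical.choose_spec (hstep q.1 q.2)⟩) n
  have hFsucc : ∀ n, (F (n + 1)).1
      = (F n).1 ++ [Classical.choose (hstep (F n).1 (F n).2)] := fun n => rfl
  have hFlen : ∀ n, (F n).1.length = n := by
    intro n
    induction n with
    | zero => rfl
    | succ n ih => rw [hFsucc]; simp [ih]
  refine ⟨fun n => (F (n + 1)).1.getLastD false, ?_⟩
  have key : ∀ n, (List.ofFn fun i : Fin n => (F (i + 1)).1.getLastD false) = (F n).1 := by
    intro n
    induction n with
    | zero => rfl
    | succ n ih =>
      rw [List.ofFn_succ', List.concat_eq_append]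
      simp only [Fin.coe_castSucc, Fin.val_last]
      rw [ih, List.getLastD_concat]
  intro n
  rw [key n]
  -- (F n).1 ∈ T : it is a prefix of some element of T
  obtain ⟨l, hlT, hpre, _⟩ := (F n).2 0
  exact hpc hpre hlT

variable {W : Type*} [Fintype W] [DecidableEq W]
variable (g : Bool → Matrix W W ℝ) (c : ℝ)

/-- growth constant -/
noncomputable def Cm : ℝ := max (max (nv c (g true)) (nv c (g false))) (max c 2)

lemma Cm_ge_two : (2:ℝ) ≤ Cm g c := le_max_of_le_right (le_max_right _ _)
lemma Cm_ge_c : c ≤ Cm g c := le_max_of_le_right (le_max_left _ _)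
lemma Cm_pos : (0:ℝ) < Cm g c := lt_of_lt_of_le two_pos (Cm_ge_two g c)
lemma Cm_ge_one : (1:ℝ) ≤ Cm g c := le_trans one_le_two (Cm_ge_two g c)

lemma nv_g_le (b : Bool) : nv c (g b) ≤ Cm g c := by
  cases b
  · exact le_max_of_le_left (le_max_right _ _)
  · exact le_max_of_le_left (le_max_left _ _)

variable {c}

lemma mp_cons (b : Bool) (t : List Bool) : mp g (b :: t) = mp g t * g b := by
  simp [mp, List.reverse_cons, List.prod_append]

lemma mp_nv_le (hc1 : 1 ≤ c) (hcard : (Fintype.card W : ℝ) ≤ c) (l : List Bool) :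
    nv c (mp g l) ≤ c * Cm g c ^ l.length := by
  have hc0 : (0:ℝ) ≤ c := le_trans zero_le_one hc1
  induction l with
  | nil => simpa [mp_nil] using nv_one_le hc0
  | cons b t ih =>
    rw [mp_cons]
    calc nv c (mp g t * g b) ≤ nv c (mp g t) * nv c (g b) := nv_mul_le hcard _ _
      _ ≤ (c * Cm g c ^ t.length) * Cm g c := by
          exact mul_le_mul ih (nv_g_le g c b) (nv_nonneg hc0 _)
            (mul_nonneg hc0 (pow_nonneg (Cm_pos g c).le _))
      _ = c * Cm g c ^ (b :: t).length := by
          rw [List.length_cons, pow_succ]; ring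

lemma product_bounded (hc1 : 1 ≤ c) (hcard : (Fintype.card W : ℝ) ≤ c)
    (H0 : ∀ σ : ℕ → Bool, Tendsto (pps g σ) atTop (𝓝 0)) :
    ∃ D : ℝ, 1 ≤ D ∧ ∀ l : List Bool, nv c (mp g l) ≤ D := by
  have hc0 : (0:ℝ) < c := lt_of_lt_of_le one_pos hc1
  by_contra hcon
  push_neg at hcon
  have hcon' : ∀ D : ℝ, ∃ l : List Bool, D < nv c (mp g l) := by
    intro D
    obtain ⟨l, hl⟩ := hcon (max 1 D) (le_max_left _ _)
    exact ⟨l, lt_of_le_of_lt (le_max_right _ _) hl⟩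
  set T : Set (List Bool) :=
    {l | ∀ p : List Bool, p <+: l → p ≠ [] → 1 < nv c (mp g p)} with hT
  have hpc : ∀ ⦃l₁ l₂ : List Bool⦄, l₁ <+: l₂ → l₂ ∈ T → l₁ ∈ T := by
    intro l₁ l₂ h12 h2 p hp hpne
    exact h2 p (hp.trans h12) hpne
  have hlong : ∀ L : ℕ, ∃ l ∈ T, L ≤ l.length := by
    intro L
    obtain ⟨l, hl⟩ := hcon' (c * c * Cm g c ^ L)
    set s : Finset ℕ :=
      (Finset.range (l.length + 1)).filter (fun j => nv c (mp g (l.take j)) ≤ c) with hs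
    have h0s : (0:ℕ) ∈ s := by
      rw [hs, Finset.mem_filter]
      constructor
      · simp
      · simpa [mp_nil] using nv_one_le hc0.le
    have hsne : s.Nonempty := ⟨0, h0s⟩
    set j := s.max' hsne with hj
    have hjmem : j ∈ (Finset.range (l.length + 1)).filter
        (fun j => nv c (mp g (l.take j)) ≤ c) := by
      rw [← hs]; exact s.max'_mem hsne
    rw [Finset.mem_filter, Finset.mem_range] at hjmem
    obtain ⟨hjle, hjc⟩ := hjmem
    have hgt : ∀ i, j < i → i ≤ l.length → c < nv c (mp g (l.take i)) := by
      intro i hji hil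
      by_contra hle
      push_neg at hle
      have hmem : i ∈ s := by
        rw [hs, Finset.mem_filter, Finset.mem_range]
        exact ⟨by omega, hle⟩
      have := Finset.le_max' s i hmem
      omega
    refine ⟨l.drop j, ?_, ?_⟩
    · intro p hp hpne
      have hp' : p = (l.drop j).take p.length := List.prefix_iff_eq_take.1 hp
      have hplen : p.length ≤ (l.drop j).length := hp.length_le
      rw [List.length_drop] at hplen
      have hsplit : l.take (j + p.length) = l.take j ++ p := by
        rw [List.take_add, ← hp']
      have h1 : nv c (mp g (l.take (j + p.length))) ≤ nv c (mp g p) * c := by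
        rw [hsplit, mp_append]
        refine le_trans (nv_mul_le hcard _ _) ?_
        exact mul_le_mul_of_nonneg_left hjc (nv_nonneg hc0.le _)
      have hppos : 0 < p.length := List.length_pos_iff.2 hpne
      have h2 : c < nv c (mp g (l.take (j + p.length))) :=
        hgt _ (by omega) (by omega)
      nlinarith [nv_nonneg hc0.le (c := c) (mp g p)]
    · -- length bound
      have hdec : nv c (mp g l) ≤ nv c (mp g (l.drop j)) * c := by
        conv_lhs => rw [← List.take_append_drop j l]
        rw [mp_append]
        refine le_trans (nv_mul_le hcard _ _) ?_
        exact mul_le_mul_of_nonneg_left hjc (nv_nonneg hc0.le _)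
      have hboundl : nv c (mp g (l.drop j)) ≤ c * Cm g c ^ (l.drop j).length :=
        mp_nv_le g hc1 hcard _
      have hfin : c * c * Cm g c ^ L < c * c * Cm g c ^ (l.drop j).length := by
        have := Cm_pos g c
        nlinarith [pow_pos (Cm_pos g c) L, pow_pos (Cm_pos g c) (l.drop j).length]
      have : Cm g c ^ L < Cm g c ^ (l.drop j).length := by
        have hcc : 0 < c * c := by positivity
        exact lt_of_mul_lt_mul_left (by linarith [hfin]) hcc.le
      have := (pow_lt_pow_iff_right₀ (Cm_ge_two g c |>.trans_lt' one_lt_two)).1 this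
      omega
  obtain ⟨σ, hσ⟩ := koenig T hpc hlong
  have h1 : ∀ n : ℕ, 1 ≤ n → 1 < nv c (pps g σ n) := by
    intro n hn
    refine hσ n _ (List.prefix_refl _) ?_
    have : (List.ofFn fun i : Fin n => σ i).length = n := by simp
    intro hnil
    rw [hnil] at this
    simp at this
    omega
  obtain ⟨N, hN⟩ := (Metric.tendsto_atTop.1 (H0 σ)) (1/(c+1)) (by positivity)
  have h2 := hN (max N 1) (le_max_left _ _)
  rw [dist_zero_right] at h2
  have h3 := h1 (max N 1) (le_max_right _ _)
  have : nv c (pps g σ (max N 1)) < 1 := by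
    unfold nv
    calc c * ‖pps g σ (max N 1)‖ < c * (1/(c+1)) := by
          exact mul_lt_mul_of_pos_left h2 hc0
      _ < 1 := by
          rw [mul_one_div, div_lt_one (by linarith)]
          linarith
  linarith

lemma small_words (hc1 : 1 ≤ c) (hcard : (Fintype.card W : ℝ) ≤ c)
    (H0 : ∀ σ : ℕ → Bool, Tendsto (pps g σ) atTop (𝓝 0)) :
    ∃ N : ℕ, 1 ≤ N ∧ ∀ l : List Bool, l.length = N → nv c (mp g l) ≤ 2⁻¹ := by
  have hc0 : (0:ℝ) < c := lt_of_lt_of_le one_pos hc1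
  obtain ⟨D, hD1, hD⟩ := product_bounded g hc1 hcard H0
  have hD0 : (0:ℝ) < D := lt_of_lt_of_le one_pos hD1
  by_contra hcon
  push_neg at hcon
  set T : Set (List Bool) :=
    {p | ∃ l : List Bool, p <+: l ∧ 2⁻¹ < nv c (mp g l)} with hT
  have hpc : ∀ ⦃l₁ l₂ : List Bool⦄, l₁ <+: l₂ → l₂ ∈ T → l₁ ∈ T := by
    rintro l₁ l₂ h12 ⟨l, hpre, hnv⟩
    exact ⟨l, h12.trans hpre, hnv⟩
  have hlong : ∀ L : ℕ, ∃ l ∈ T, L ≤ l.length := by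
    intro L
    obtain ⟨l, hlen, hnv⟩ := hcon (L + 1) (by omega)
    exact ⟨l, ⟨l, List.prefix_refl _, hnv⟩, by omega⟩
  obtain ⟨σ, hσ⟩ := koenig T hpc hlong
  have hlow : ∀ n : ℕ, 2⁻¹ / D ≤ nv c (pps g σ n) := by
    intro n
    obtain ⟨l, hpre, hnv⟩ := hσ n
    obtain ⟨t, rfl⟩ := hpre
    rw [mp_append] at hnv
    have h1 : nv c (mp g t * mp g (List.ofFn fun i : Fin n => σ i)) ≤
        D * nv c (pps g σ n) := by
      refine le_trans (nv_mul_le hcard _ _) ?_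
      exact mul_le_mul_of_nonneg_right (hD _) (nv_nonneg hc0.le _)
    rw [div_le_iff₀ hD0, mul_comm]
    linarith
  obtain ⟨N, hN⟩ := (Metric.tendsto_atTop.1 (H0 σ)) (2⁻¹ / D / (c+1)) (by positivity)
  have h2 := hN N le_rfl
  rw [dist_zero_right] at h2
  have h3 := hlow N
  have : nv c (pps g σ N) < 2⁻¹ / D := by
    unfold nv
    calc c * ‖pps g σ N‖ < c * (2⁻¹ / D / (c+1)) := mul_lt_mul_of_pos_left h2 hc0
      _ = (2⁻¹ / D) * (c / (c + 1)) := by ring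
      _ < (2⁻¹ / D) * 1 := by
          refine mul_lt_mul_of_pos_left ?_ (by positivity)
          rw [div_lt_one (by linarith)]
          linarith
      _ = 2⁻¹ / D := mul_one _
  linarith

lemma word_exp_bound (hc1 : 1 ≤ c) (hcard : (Fintype.card W : ℝ) ≤ c)
    {N : ℕ} (hN1 : 1 ≤ N)
    (hsmall : ∀ l : List Bool, l.length = N → nv c (mp g l) ≤ 2⁻¹) :
    ∀ l : List Bool, nv c (mp g l) ≤ (c * Cm g c ^ N) * (2⁻¹ : ℝ) ^ (l.length / N) := by
  have hc0 : (0:ℝ) < c := lt_of_lt_of_le one_pos hc1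
  have key : ∀ n : ℕ, ∀ l : List Bool, l.length = n →
      nv c (mp g l) ≤ (c * Cm g c ^ N) * (2⁻¹ : ℝ) ^ (n / N) := by
    intro n
    induction n using Nat.strong_induction_on with
    | _ n ih =>
      intro l hl
      by_cases hn : n < N
      · have h1 : nv c (mp g l) ≤ c * Cm g c ^ n := hl ▸ mp_nv_le g hc1 hcard l
        have h2 : Cm g c ^ n ≤ Cm g c ^ N :=
          pow_le_pow_right₀ (Cm_ge_one g c) (by omega)
        rw [Nat.div_eq_of_lt hn, pow_zero, mul_one]
        nlinarith
      · push_neg at hn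
        have hsplit : l = l.take N ++ l.drop N := (List.take_append_drop N l).symm
        have hlt : (l.take N).length = N := by
          rw [List.length_take]; omega
        have hld : (l.drop N).length = n - N := by
          rw [List.length_drop]; omega
        have h1 : nv c (mp g l) ≤ nv c (mp g (l.drop N)) * nv c (mp g (l.take N)) := by
          conv_lhs => rw [hsplit]
          rw [mp_append]
          exact nv_mul_le hcard _ _
        have h2 := ih (n - N) (by omega) (l.drop N) hld
        have h3 := hsmall (l.take N) hlt
        have h4 : nv c (mp g l) ≤ ((c * Cm g c ^ N) * (2⁻¹ : ℝ) ^ ((n-N) / N)) * 2⁻¹ := by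
          refine le_trans h1 ?_
          exact mul_le_mul h2 h3 (nv_nonneg hc0.le _)
            (mul_nonneg (mul_nonneg hc0.le (pow_nonneg (Cm_pos g c).le _))
              (pow_nonneg (by norm_num) _))
        have h5 : n / N = (n - N) / N + 1 := Nat.div_eq_sub_div (by omega) hn
        rw [h5, pow_succ]
        linarith
  intro l
  exact key l.length l rfl

lemma core_exp (hc1 : 1 ≤ c) (hcard : (Fintype.card W : ℝ) ≤ c)
    (H0 : ∀ σ : ℕ → Bool, Tendsto (pps g σ) atTop (𝓝 0)) :
    ∃ C₀ : ℝ, 0 < C₀ ∧ ∃ q : ℝ, 0 ≤ q ∧ q < 1 ∧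
      ∀ l : List Bool, 1 ≤ l.length → ‖mp g l‖ ≤ C₀ * q ^ l.length := by
  have hc0 : (0:ℝ) < c := lt_of_lt_of_le one_pos hc1
  obtain ⟨N, hN1, hsmall⟩ := small_words g hc1 hcard H0
  have hNR : (0:ℝ) < (N:ℝ) := by exact_mod_cast hN1
  refine ⟨2 * (c * Cm g c ^ N),
    by have := mul_pos hc0 (pow_pos (Cm_pos g c) N); linarith,
    (2⁻¹ : ℝ) ^ ((N:ℝ)⁻¹), ?_, ?_, ?_⟩
  · exact Real.rpow_nonneg (by norm_num) _
  · exact Real.rpow_lt_one (by norm_num) (by norm_num) (by positivity)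
  · intro l hl
    set k := l.length with hk
    have h1 : ‖mp g l‖ ≤ nv c (mp g l) := norm_le_nv hc1 _
    have h2 := word_exp_bound g hc1 hcard hN1 hsmall l
    -- exponent comparison
    have hq : ((2⁻¹ : ℝ) ^ ((N:ℝ)⁻¹)) ^ k = (2⁻¹ : ℝ) ^ ((N:ℝ)⁻¹ * k) := by
      rw [← Real.rpow_natCast ((2⁻¹ : ℝ) ^ ((N:ℝ)⁻¹)) k, ← Real.rpow_mul (by norm_num)]
    have hdexp : (2⁻¹ : ℝ) ^ (k / N) = (2⁻¹ : ℝ) ^ ((k / N : ℕ) : ℝ) := by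
      rw [Real.rpow_natCast]
    have hcomp : (k : ℝ) < (N : ℝ) * ((k / N : ℕ) + 1) := by
      have hmod := Nat.div_add_mod k N
      have hmlt : k % N < N := Nat.mod_lt _ (by omega)
      have : (k:ℝ) = (N:ℝ) * ((k / N : ℕ) : ℝ) + ((k % N : ℕ) : ℝ) := by
        exact_mod_cast hmod.symm
      rw [this]
      have : ((k % N : ℕ) : ℝ) < (N:ℝ) := by exact_mod_cast hmlt
      nlinarith
    have hNinv : (N:ℝ)⁻¹ * (N:ℝ) = 1 := inv_mul_cancel₀ hNR.ne'
    have hexp : (N:ℝ)⁻¹ * k - 1 ≤ ((k / N : ℕ) : ℝ) := by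
      have h6 : (N:ℝ)⁻¹ * k < (N:ℝ)⁻¹ * ((N:ℝ) * (((k / N : ℕ) : ℝ) + 1)) :=
        mul_lt_mul_of_pos_left hcomp (inv_pos.2 hNR)
      rw [← mul_assoc, hNinv, one_mul] at h6
      linarith
    have hmono : (2⁻¹:ℝ) ^ (((k / N : ℕ) : ℕ):ℝ) ≤ (2⁻¹:ℝ) ^ ((N:ℝ)⁻¹ * k - 1) :=
      Real.rpow_le_rpow_of_exponent_ge (by norm_num) (by norm_num) hexp
    have hsub : (2⁻¹:ℝ) ^ ((N:ℝ)⁻¹ * k - 1) = 2 * (2⁻¹:ℝ) ^ ((N:ℝ)⁻¹ * (k:ℝ)) := by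
      rw [Real.rpow_sub (by norm_num : (0:ℝ) < 2⁻¹), Real.rpow_one]
      ring
    have hpos1 : (0:ℝ) < c * Cm g c ^ N := mul_pos hc0 (pow_pos (Cm_pos g c) N)
    calc ‖mp g l‖ ≤ nv c (mp g l) := h1
      _ ≤ (c * Cm g c ^ N) * (2⁻¹ : ℝ) ^ (k / N) := h2
      _ = (c * Cm g c ^ N) * (2⁻¹:ℝ) ^ (((k / N : ℕ) : ℕ):ℝ) := by rw [← hdexp]
      _ ≤ (c * Cm g c ^ N) * (2 * (2⁻¹:ℝ) ^ ((N:ℝ)⁻¹ * (k:ℝ))) := by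
          refine mul_le_mul_of_nonneg_left ?_ hpos1.le
          rw [← hsub]
          exact hmono
      _ = 2 * (c * Cm g c ^ N) * ((2⁻¹ : ℝ) ^ ((N:ℝ)⁻¹)) ^ k := by
          rw [hq]; ring

end Core


section Conv

variable {V W : Type*} [Fintype V] [DecidableEq V] [Fintype W] [DecidableEq W]

variable (F : Fin 3 → Fin 3 → Matrix W W ℝ)

/-- the word of transition factors of a left product -/
noncomputable def KK (σ : ℕ → Fin 3) : ℕ → Matrix W W ℝ
  | 0 => 1
  | n+1 => F (σ (n+1)) (σ n) * KK σ n

/-- switch count -/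
def swc (σ : ℕ → Fin 3) : ℕ → ℕ
  | 0 => 0
  | n+1 => swc σ n + (if σ (n+1) = σ n then 0 else 1)

lemma fin3_cases (x : Fin 3) : x = 0 ∨ x = 1 ∨ x = 2 := by omega

lemma leftProd_decomp (G : Fin 3 → Matrix V V ℝ) (u : Fin 3 → Matrix V W ℝ)
    (e : Fin 3 → Matrix W V ℝ)
    (hGue : ∀ x, G x = u x * e x) (hF : ∀ a b, e a * u b = F a b)
    (σ : ℕ → Fin 3) (n : ℕ) :
    leftProd G σ (n+1) = u (σ n) * KK F σ n * e (σ 0) := by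
  induction n with
  | zero =>
    show G (σ 0) * (1 : Matrix V V ℝ) = _
    rw [hGue]
    simp [KK]
  | succ n ih =>
    show G (σ (n+1)) * leftProd G σ (n+1) = _
    rw [ih, hGue]
    calc u (σ (n+1)) * e (σ (n+1)) * (u (σ n) * KK F σ n * e (σ 0))
        = u (σ (n+1)) * ((e (σ (n+1)) * u (σ n)) * (KK F σ n * e (σ 0))) := by
          simp only [Matrix.mul_assoc]
      _ = u (σ (n+1)) * (F (σ (n+1)) (σ n) * (KK F σ n * e (σ 0))) := by rw [hF]
      _ = u (σ (n+1)) * KK F σ (n+1) * e (σ 0) := by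
          show _ = u (σ (n+1)) * (F (σ (n+1)) (σ n) * KK F σ n) * e (σ 0)
          simp only [Matrix.mul_assoc]

variable {c : ℝ}

lemma KK_bound (hdiag : ∀ x, F x x = 1) (h12 : F 1 2 = 0) (h21 : F 2 1 = 0)
    (hc1 : 1 ≤ c) (hcard : (Fintype.card W : ℝ) ≤ c)
    {C₀ q : ℝ} (hC₀ : 0 < C₀) (hq0 : 0 < q) (hq1 : q < 1)
    (Hmix : ∀ (ℓ : ℕ) (f : Fin ℓ → Matrix W W ℝ),
      (∀ i, f i = F 0 1 * F 1 0 ∨ f i = F 0 2 * F 2 0) → 1 ≤ ℓ →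
      ‖(List.ofFn f).prod‖ ≤ C₀ * q ^ ℓ)
    (σ : ℕ → Fin 3) :
    ∃ BB : ℝ, 0 < BB ∧ ∀ n, nv c (KK F σ n) ≤ BB * (Real.sqrt q) ^ (swc σ n) := by
  have hc0 : (0:ℝ) < c := lt_of_lt_of_le one_pos hc1
  set Pm := F 0 1 * F 1 0 with hPm
  set Qm := F 0 2 * F 2 0 with hQm
  -- the invariant
  have Inv : ∀ n : ℕ, KK F σ n = 0 ∨
      ∃ (ℓ : ℕ) (f : Fin ℓ → Matrix W W ℝ) (p s : Matrix W W ℝ),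
        (∀ i, f i = Pm ∨ f i = Qm) ∧
        KK F σ n = p * (List.ofFn f).prod * s ∧
        (s = 1 ∨ s = F 0 1 ∨ s = F 0 2) ∧
        ((σ n = 0 ∧ p = 1 ∧ swc σ n ≤ 2*ℓ+1) ∨
         (σ n ≠ 0 ∧ p = F (σ n) 0 ∧ swc σ n ≤ 2*ℓ+2) ∨
         (σ n ≠ 0 ∧ p = 1 ∧ ℓ = 0 ∧ s = 1 ∧ swc σ n = 0)) := by
    intro n
    induction n with
    | zero =>
      right
      refine ⟨0, Fin.elim0, 1, 1, (fun i => i.elim0), by simp [KK], Or.inl rfl, ?_⟩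
      rcases fin3_cases (σ 0) with h | h | h
      · exact Or.inl ⟨h, rfl, by simp [swc]⟩
      · exact Or.inr (Or.inr ⟨by simp [h], rfl, rfl, rfl, by simp [swc]⟩)
      · exact Or.inr (Or.inr ⟨by simp [h], rfl, rfl, rfl, by simp [swc]⟩)
    | succ n ih =>
      have hKs : KK F σ (n+1) = F (σ (n+1)) (σ n) * KK F σ n := rfl
      by_cases heq : σ (n+1) = σ n
      · -- no switch
        have hswc : swc σ (n+1) = swc σ n := by simp [swc, heq]
        have hKK : KK F σ (n+1) = KK F σ n := by
          rw [hKs, heq, hdiag, Matrix.one_mul]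
        rcases ih with h0 | ⟨ℓ, f, p, s, hf, hshape, hs, hcl⟩
        · left; rw [hKK, h0]
        · right
          exact ⟨ℓ, f, p, s, hf, by rw [hKK, hshape], hs, by rw [heq, hswc]; exact hcl⟩
      · -- switch
        have hswc : swc σ (n+1) = swc σ n + 1 := by simp [swc, heq]
        rcases ih with h0 | ⟨ℓ, f, p, s, hf, hshape, hs, hcl⟩
        · left; rw [hKs, h0, Matrix.mul_zero]
        rcases hcl with ⟨hσ0, hp, hsw⟩ | ⟨hσX, hp, hsw⟩ | ⟨hσX, hp, hl0, hs1, hsw⟩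
        · -- L1 : σ n = 0, p = 1 ; new letter nonzero
          right
          have hne : σ (n+1) ≠ 0 := by rw [hσ0] at heq; exact heq
          refine ⟨ℓ, f, F (σ (n+1)) 0, s, hf, ?_, hs, ?_⟩
          · rw [hKs, hshape, hp, hσ0]
            simp only [Matrix.one_mul, Matrix.mul_assoc]
          · exact Or.inr (Or.inl ⟨hne, rfl, by omega⟩)
        · -- L2 : σ n = X ≠ 0, p = F X 0
          rcases fin3_cases (σ (n+1)) with hy | hy | hy
          · -- to 0 : pairing
            right
            have hXm : F 0 (σ n) * F (σ n) 0 = Pm ∨ F 0 (σ n) * F (σ n) 0 = Qm := by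
              rcases fin3_cases (σ n) with hx | hx | hx
              · exact absurd hx hσX
              · left; rw [hx]
              · right; rw [hx]
            refine ⟨ℓ+1, Fin.cons (F 0 (σ n) * F (σ n) 0) f, 1, s, ?_, ?_, hs, ?_⟩
            · intro i
              refine Fin.cases ?_ ?_ i
              · simpa using hXm
              · intro j; simpa using hf j
            · rw [hKs, hshape, hp, hy]
              rw [List.ofFn_succ]
              simp only [Fin.cons_zero, Fin.cons_succ, List.prod_cons]
              simp only [Matrix.one_mul, Matrix.mul_assoc]
            · refine Or.inl ⟨hy, rfl, by omega⟩
          · -- to 1 : must have σ n = 2 (since σ n ≠ 0, σ n ≠ σ (n+1))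
            left
            have hx2 : σ n = 2 := by
              rcases fin3_cases (σ n) with hx | hx | hx
              · exact absurd hx hσX
              · exact absurd (hy.trans hx.symm) heq
              · exact hx
            rw [hKs, hy, hx2, h12, Matrix.zero_mul]
          · left
            have hx1 : σ n = 1 := by
              rcases fin3_cases (σ n) with hx | hx | hx
              · exact absurd hx hσX
              · exact hx
              · exact absurd (hy.trans hx.symm) heq
            rw [hKs, hy, hx1, h21, Matrix.zero_mul]
        · -- L3 : initial non-A block
          subst hl0
          rcases fin3_cases (σ (n+1)) with hy | hy | hy
          · right
            have hsX : F 0 (σ n) = F 0 1 ∨ F 0 (σ n) = F 0 2 := by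
              rcases fin3_cases (σ n) with hx | hx | hx
              · exact absurd hx hσX
              · left; rw [hx]
              · right; rw [hx]
            refine ⟨0, f, 1, F 0 (σ n), hf, ?_, Or.inr (by exact hsX), ?_⟩
            · rw [hKs, hshape, hp, hs1, hy]
              have hfl : (List.ofFn f).prod = 1 := by simp
              rw [hfl]
              simp
            · exact Or.inl ⟨hy, rfl, by omega⟩
          · left
            have hx2 : σ n = 2 := by
              rcases fin3_cases (σ n) with hx | hx | hx
              · exact absurd hx hσX
              · exact absurd (hy.trans hx.symm) heq
              · exact hx
            rw [hKs, hy, hx2, h12, Matrix.zero_mul]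
          · left
            have hx1 : σ n = 1 := by
              rcases fin3_cases (σ n) with hx | hx | hx
              · exact absurd hx hσX
              · exact hx
              · exact absurd (hy.trans hx.symm) heq
            rw [hKs, hy, hx1, h21, Matrix.zero_mul]
  -- now derive the bound
  set Q := Real.sqrt q with hQdef
  have hQ0 : 0 < Q := Real.sqrt_pos.2 hq0
  have hQ1 : Q < 1 := by
    nlinarith [Real.sq_sqrt hq0.le, Real.sqrt_nonneg q]
  have hQsq : Q ^ 2 = q := Real.sq_sqrt hq0.le
  set D₀ := max C₀ 1 with hD₀
  set Bp := max c (max (nv c (F 1 0)) (nv c (F 2 0))) with hBp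
  set Bs := max c (max (nv c (F 0 1)) (nv c (F 0 2))) with hBs
  have hBp0 : 0 < Bp := lt_of_lt_of_le hc0 (le_max_left _ _)
  have hBs0 : 0 < Bs := lt_of_lt_of_le hc0 (le_max_left _ _)
  have hD₀0 : (0:ℝ) < D₀ := lt_of_lt_of_le one_pos (le_max_right _ _)
  refine ⟨Bp * (c * D₀) * Bs / q, by positivity, ?_⟩
  intro n
  rcases Inv n with h0 | ⟨ℓ, f, p, s, hf, hshape, hs, hcl⟩
  · rw [h0]
    have : nv c (0 : Matrix W W ℝ) = 0 := by simp [nv]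
    rw [this]
    positivity
  · -- p bound
    have hpb : nv c p ≤ Bp := by
      rcases hcl with ⟨_, hp, _⟩ | ⟨hne, hp, _⟩ | ⟨_, hp, _, _, _⟩
      · rw [hp]; exact le_trans (nv_one_le hc0.le) (le_max_left _ _)
      · rcases fin3_cases (σ n) with hx | hx | hx
        · exact absurd hx hne
        · rw [hp, hx]; exact le_max_of_le_right (le_max_left _ _)
        · rw [hp, hx]; exact le_max_of_le_right (le_max_right _ _)
      · rw [hp]; exact le_trans (nv_one_le hc0.le) (le_max_left _ _)
    have hsb : nv c s ≤ Bs := by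
      rcases hs with hs | hs | hs
      · rw [hs]; exact le_trans (nv_one_le hc0.le) (le_max_left _ _)
      · rw [hs]; exact le_max_of_le_right (le_max_left _ _)
      · rw [hs]; exact le_max_of_le_right (le_max_right _ _)
    have hWb : ‖(List.ofFn f).prod‖ ≤ D₀ * q ^ ℓ := by
      rcases Nat.eq_zero_or_pos ℓ with hl | hl
      · subst hl
        simp only [List.ofFn_zero, List.prod_nil, pow_zero, mul_one]
        exact le_trans norm_one_le (le_max_right _ _)
      · refine le_trans (Hmix ℓ f hf hl) ?_
        have : C₀ ≤ D₀ := le_max_left _ _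
        nlinarith [pow_pos hq0 ℓ]
    have hWb' : nv c ((List.ofFn f).prod) ≤ c * (D₀ * q ^ ℓ) := by
      unfold nv
      exact mul_le_mul_of_nonneg_left hWb hc0.le
    have hswle : swc σ n ≤ 2*ℓ+2 := by
      rcases hcl with ⟨_, _, h⟩ | ⟨_, _, h⟩ | ⟨_, _, _, _, h⟩ <;> omega
    have hqQ : q ^ ℓ ≤ Q ^ (swc σ n) / q := by
      have h1 : Q ^ (2*ℓ+2) ≤ Q ^ (swc σ n) :=
        pow_le_pow_of_le_one hQ0.le hQ1.le hswle
      have h2 : Q ^ (2*ℓ+2) = q ^ ℓ * q := by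
        rw [← hQsq]
        rw [← pow_mul]
        ring
      rw [le_div_iff₀ hq0]
      nlinarith
    have hKv : nv c (KK F σ n) ≤ nv c p * (c * (D₀ * q ^ ℓ)) * Bs := by
      rw [hshape]
      calc nv c (p * (List.ofFn f).prod * s)
          ≤ nv c (p * (List.ofFn f).prod) * nv c s := nv_mul_le hcard _ _
        _ ≤ (nv c p * nv c (List.ofFn f).prod) * nv c s := by
            refine mul_le_mul_of_nonneg_right (nv_mul_le hcard _ _) (nv_nonneg hc0.le _)
        _ ≤ nv c p * (c * (D₀ * q ^ ℓ)) * Bs := by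
            refine mul_le_mul ?_ hsb (nv_nonneg hc0.le _)
              (mul_nonneg (nv_nonneg hc0.le _) (by positivity))
            exact mul_le_mul_of_nonneg_left hWb' (nv_nonneg hc0.le _)
    calc nv c (KK F σ n) ≤ nv c p * (c * (D₀ * q ^ ℓ)) * Bs := hKv
      _ ≤ Bp * (c * (D₀ * q ^ ℓ)) * Bs := by
          refine mul_le_mul_of_nonneg_right (mul_le_mul_of_nonneg_right hpb ?_) hBs0.le
          positivity
      _ ≤ Bp * (c * D₀) * Bs * (Q ^ (swc σ n) / q) := by
          have := mul_le_mul_of_nonneg_left hqQ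
            (by positivity : (0:ℝ) ≤ Bp * (c * D₀) * Bs)
          nlinarith [this]
      _ = Bp * (c * D₀) * Bs / q * Q ^ (swc σ n) := by ring
lemma geo_le {Q : ℝ} (h0 : 0 ≤ Q) (h1 : Q < 1) (M : ℕ) :
    ∑ j ∈ Finset.range M, Q ^ j ≤ 1 / (1 - Q) := by
  rw [geom_sum_eq (ne_of_lt h1)]
  have h2 : 0 < 1 - Q := by linarith
  have h3 : (Q^M - 1)/(Q-1) = (1 - Q^M)/(1-Q) := by
    rw [← neg_div_neg_eq]; ring_nf
  rw [h3, div_le_div_iff₀ h2 h2]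
  nlinarith [pow_nonneg h0 M]

lemma conv_abstract {V W : Type*} [Fintype V] [DecidableEq V] [Fintype W]
    [DecidableEq W] (F : Fin 3 → Fin 3 → Matrix W W ℝ) {c : ℝ}
    (G : Fin 3 → Matrix V V ℝ) (u : Fin 3 → Matrix V W ℝ)
    (e : Fin 3 → Matrix W V ℝ)
    (hGue : ∀ x, G x = u x * e x) (hF : ∀ a b, e a * u b = F a b)
    (hdiag : ∀ x, F x x = 1) (h12 : F 1 2 = 0) (h21 : F 2 1 = 0)
    (hc1 : 1 ≤ c) (hcard : (Fintype.card W : ℝ) ≤ c)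
    {C₀ q : ℝ} (hC₀ : 0 < C₀) (hq0 : 0 < q) (hq1 : q < 1)
    (Hmix : ∀ (ℓ : ℕ) (f : Fin ℓ → Matrix W W ℝ),
      (∀ i, f i = F 0 1 * F 1 0 ∨ f i = F 0 2 * F 2 0) → 1 ≤ ℓ →
      ‖(List.ofFn f).prod‖ ≤ C₀ * q ^ ℓ)
    (σ : ℕ → Fin 3) :
    ∃ L, Tendsto (leftProd G σ) atTop (𝓝 L) := by
  have hc0 : (0:ℝ) < c := lt_of_lt_of_le one_pos hc1
  obtain ⟨BB, hBB, hKb⟩ := KK_bound F hdiag h12 h21 hc1 hcard hC₀ hq0 hq1 Hmix σ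
  set Q := Real.sqrt q with hQdef
  have hQ0 : 0 < Q := Real.sqrt_pos.2 hq0
  have hQ1 : Q < 1 := by
    nlinarith [Real.sq_sqrt hq0.le, Real.sqrt_nonneg q]
  have hprod : ∀ (x y : Fin 3) (K : Matrix W W ℝ),
      ‖u x * K * e y‖ ≤ nv c (u x) * nv c K * nv c (e y) := by
    intro x y K
    refine (norm_le_nv hc1 _).trans ?_
    calc nv c (u x * K * e y) ≤ nv c (u x * K) * nv c (e y) := nv_mul_le hcard _ _
      _ ≤ (nv c (u x) * nv c K) * nv c (e y) :=
          mul_le_mul_of_nonneg_right (nv_mul_le hcard _ _) (nv_nonneg hc0.le _)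
  set Bu := max (nv c (u 0)) (max (nv c (u 1)) (nv c (u 2))) with hBu
  set Be := max (nv c (e 0)) (max (nv c (e 1)) (nv c (e 2))) with hBe
  have hub : ∀ x, nv c (u x) ≤ Bu := by
    intro x
    rcases fin3_cases x with h | h | h <;> rw [h]
    · exact le_max_left _ _
    · exact le_max_of_le_right (le_max_left _ _)
    · exact le_max_of_le_right (le_max_right _ _)
  have heb : ∀ x, nv c (e x) ≤ Be := by
    intro x
    rcases fin3_cases x with h | h | h <;> rw [h]
    · exact le_max_left _ _
    · exact le_max_of_le_right (le_max_left _ _)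
    · exact le_max_of_le_right (le_max_right _ _)
  have hBu0 : 0 ≤ Bu := le_trans (nv_nonneg hc0.le _) (le_max_left _ _)
  have hBe0 : 0 ≤ Be := le_trans (nv_nonneg hc0.le _) (le_max_left _ _)
  set CC := Bu * BB * Be with hCC
  have hCC0 : 0 ≤ CC := by positivity
  have hterm : ∀ (x y : Fin 3) (n : ℕ),
      ‖u x * KK F σ n * e y‖ ≤ CC * Q ^ (swc σ n) := by
    intro x y n
    refine (hprod x y _).trans ?_
    calc nv c (u x) * nv c (KK F σ n) * nv c (e y)
        ≤ Bu * (BB * Q ^ (swc σ n)) * Be := by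
          refine mul_le_mul (mul_le_mul (hub x) (hKb n) (nv_nonneg hc0.le _) hBu0)
            (heb y) (nv_nonneg hc0.le _) ?_
          positivity
      _ = CC * Q ^ (swc σ n) := by rw [hCC]; ring
  have hd : ∀ n, dist (leftProd G σ (n+1)) (leftProd G σ (n+2)) ≤
      (if σ (n+1) = σ n then 0 else 2 * CC * Q ^ (swc σ n)) := by
    intro n
    rw [leftProd_decomp F G u e hGue hF σ n, leftProd_decomp F G u e hGue hF σ (n+1)]
    by_cases heq : σ (n+1) = σ n
    · rw [if_pos heq]
      have hKK : KK F σ (n+1) = KK F σ n := by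
        show F (σ (n+1)) (σ n) * KK F σ n = _
        rw [heq, hdiag, Matrix.one_mul]
      rw [heq, hKK]
      simp
    · rw [if_neg heq]
      have h1 : swc σ (n+1) = swc σ n + 1 := by simp [swc, heq]
      refine (dist_le_norm_add_norm _ _).trans ?_
      have t1 := hterm (σ n) (σ 0) n
      have t2 := hterm (σ (n+1)) (σ 0) (n+1)
      have h2 : CC * Q ^ (swc σ (n+1)) ≤ CC * Q ^ (swc σ n) := by
        rw [h1]
        refine mul_le_mul_of_nonneg_left ?_ hCC0
        exact pow_le_pow_of_le_one hQ0.le hQ1.le (by omega)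
      linarith
  have hsum : Summable (fun n => dist (leftProd G σ n) (leftProd G σ (n+1))) := by
    have key : ∀ N, ∑ n ∈ Finset.range N,
        dist (leftProd G σ (n+1)) (leftProd G σ (n+2)) ≤
        2*CC * ∑ j ∈ Finset.range (swc σ N), Q ^ j := by
      intro N
      induction N with
      | zero => simp [swc]
      | succ N ihN =>
        rw [Finset.sum_range_succ]
        by_cases heq : σ (N+1) = σ N
        · have hdN := hd N
          rw [if_pos heq] at hdN
          have hsw : swc σ (N+1) = swc σ N := by simp [swc, heq]
          rw [hsw]
          linarith
        · have hdN := hd N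
          rw [if_neg heq] at hdN
          have hsw : swc σ (N+1) = swc σ N + 1 := by simp [swc, heq]
          rw [hsw, Finset.sum_range_succ, mul_add]
          linarith
    refine summable_of_sum_range_le (fun n => dist_nonneg)
      (c := dist (leftProd G σ 0) (leftProd G σ 1) + 2*CC * (1/(1-Q))) ?_
    intro N
    cases N with
    | zero =>
      simp only [Finset.range_zero, Finset.sum_empty]
      have h1 : (0:ℝ) ≤ 2*CC * (1/(1-Q)) := by
        have : 0 < 1 - Q := by linarith
        positivity
      have h2 : (0:ℝ) ≤ dist (leftProd G σ 0) (leftProd G σ 1) := dist_nonneg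
      linarith
    | succ M =>
      rw [Finset.sum_range_succ']
      have h1 := key M
      have h2 : 2*CC * ∑ j ∈ Finset.range (swc σ M), Q ^ j ≤ 2*CC * (1/(1-Q)) := by
        refine mul_le_mul_of_nonneg_left (geo_le hQ0.le hQ1 _) (by positivity)
      linarith
  exact cauchySeq_tendsto_of_complete (cauchySeq_of_summable_dist hsum)

end Conv

section Main

variable {m : ℕ} (M₁ M₂ M₃ : Matrix (Fin m) (Fin m) ℝ)

lemma Tm_diag (x : Fin 3) : Tm M₁ M₂ M₃ x x = 1 := by simp [Tm]
lemma Tm_01 : Tm M₁ M₂ M₃ 0 1 = M₂ := by simp [Tm]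
lemma Tm_02 : Tm M₁ M₂ M₃ 0 2 = M₃ := by simp [Tm]
lemma Tm_10 : Tm M₁ M₂ M₃ 1 0 = M₁ := by simp [Tm]
lemma Tm_20 : Tm M₁ M₂ M₃ 2 0 = M₁ := by simp [Tm]
lemma Tm_12 : Tm M₁ M₂ M₃ 1 2 = 0 := by simp [Tm]
lemma Tm_21 : Tm M₁ M₂ M₃ 2 1 = 0 := by simp [Tm]

/-- the two generators -/
noncomputable def gB : Bool → Matrix (Fin m) (Fin m) ℝ :=
  fun b => cond b (M₂ * M₁) (M₃ * M₁)

lemma lcp_implies_H0 (hLCP : IsLCP ![blkA M₁, blkB M₂, blkC M₃]) :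
    ∀ y : ℕ → Bool, Tendsto (pps (gB M₁ M₂ M₃) y) atTop (𝓝 0) := by
  intro y
  classical
  set G : Fin 3 → Matrix (Fin 3 × Fin m) (Fin 3 × Fin m) ℝ :=
    ![blkA M₁, blkB M₂, blkC M₃] with hG
  set F := Tm M₁ M₂ M₃ with hF
  set letter : Bool → Fin 3 := fun b => cond b 1 2 with hletter
  set σ : ℕ → Fin 3 := fun n => if n % 2 = 0 then 0 else letter (y (n / 2)) with hσ
  have hσe : ∀ i, σ (2 * i) = 0 := by
    intro i; simp [hσ, Nat.mul_mod_right]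
  have hσo : ∀ i, σ (2 * i + 1) = letter (y i) := by
    intro i
    have h1 : (2 * i + 1) % 2 = 1 := by omega
    have h2 : (2 * i + 1) / 2 = i := by omega
    simp [hσ, h1, h2]
  have hlt : letter true = 1 := rfl
  have hlf : letter false = 2 := rfl
  -- the key product identity
  have hKK : ∀ n, KK F σ (2 * n) = pps (gB M₁ M₂ M₃) y n := by
    intro n
    induction n with
    | zero => simp [KK, pps_zero]
    | succ n ih =>
      have e1 : 2 * (n + 1) = (2 * n + 1) + 1 := by ring
      rw [e1]
      have e2 : KK F σ ((2 * n + 1) + 1)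
          = F (σ (2 * n + 1 + 1)) (σ (2 * n + 1))
            * (F (σ (2 * n + 1)) (σ (2 * n)) * KK F σ (2 * n)) := rfl
      rw [e2]
      have e3 : σ (2 * n + 1 + 1) = 0 := by
        have h4 : 2 * n + 1 + 1 = 2 * (n + 1) := by ring
        rw [h4, hσe]
      rw [e3, hσo, hσe, ih, pps_succ]
      cases hyn : y n
      · rw [hlf, hF, Tm_02, Tm_20,
          show gB M₁ M₂ M₃ false = M₃ * M₁ from rfl, Matrix.mul_assoc]
      · rw [hlt, hF, Tm_01, Tm_10,
          show gB M₁ M₂ M₃ true = M₂ * M₁ from rfl, Matrix.mul_assoc]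
  obtain ⟨L, hL⟩ := hLCP σ
  have hext : ∀ (a x : Fin 3) (K : Matrix (Fin m) (Fin m) ℝ),
      (Ee m a)ᵀ * (uu M₁ M₂ M₃ x * K * (Ee m 0)ᵀ) * Ee m 0 = Tm M₁ M₂ M₃ a x * K := by
    intro a x K
    calc (Ee m a)ᵀ * (uu M₁ M₂ M₃ x * K * (Ee m 0)ᵀ) * Ee m 0
        = ((Ee m a)ᵀ * uu M₁ M₂ M₃ x) * (K * ((Ee m 0)ᵀ * Ee m 0)) := by
          simp only [Matrix.mul_assoc]
      _ = Tm M₁ M₂ M₃ a x * K := by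
          rw [EeT_mul_uu, EeT_mul_Ee, if_pos rfl, Matrix.mul_one]
  have hcontΨ : ∀ a : Fin 3, Continuous
      (fun M : Matrix (Fin 3 × Fin m) (Fin 3 × Fin m) ℝ => (Ee m a)ᵀ * M * Ee m 0) :=
    fun a => (continuous_const.matrix_mul continuous_id).matrix_mul continuous_const
  have hdecomp : ∀ n, leftProd G σ (n + 1)
      = uu M₁ M₂ M₃ (σ n) * KK F σ n * (Ee m (σ 0))ᵀ :=
    leftProd_decomp F G (uu M₁ M₂ M₃) (fun x => (Ee m x)ᵀ)
      (blk_eq_uu_mul M₁ M₂ M₃) (EeT_mul_uu M₁ M₂ M₃) σ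
  have hσz : σ 0 = 0 := hσe 0
  have hodd : ∀ a : Fin 3, Tendsto
      (fun n => Tm M₁ M₂ M₃ a 0 * KK F σ (2 * n)) atTop
      (𝓝 ((Ee m a)ᵀ * L * Ee m 0)) := by
    intro a
    have h1 : Tendsto (fun n : ℕ => 2 * n + 1) atTop atTop :=
      tendsto_atTop_mono (fun n => by simp only [id_eq]; omega) tendsto_id
    have h3 := ((hcontΨ a).tendsto L).comp (hL.comp h1)
    refine h3.congr ?_
    intro n
    simp only [Function.comp]
    rw [hdecomp (2 * n), hσz, hσe, hext]
  have heven : ∀ a : Fin 3, Tendsto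
      (fun n => Tm M₁ M₂ M₃ a (letter (y n)) * (M₁ * KK F σ (2 * n))) atTop
      (𝓝 ((Ee m a)ᵀ * L * Ee m 0)) := by
    intro a
    have h1 : Tendsto (fun n : ℕ => 2 * n + 1 + 1) atTop atTop :=
      tendsto_atTop_mono (fun n => by simp only [id_eq]; omega) tendsto_id
    have h3 := ((hcontΨ a).tendsto L).comp (hL.comp h1)
    refine h3.congr ?_
    intro n
    simp only [Function.comp]
    rw [hdecomp (2 * n + 1), hσz, hext]
    have e2 : KK F σ (2 * n + 1) = F (σ (2 * n + 1)) (σ (2 * n)) * KK F σ (2 * n) := rfl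
    rw [e2, hσo, hσe]
    have e3 : F (letter (y n)) 0 = M₁ := by
      cases hyn : y n
      · rw [hlf, hF, Tm_20]
      · rw [hlt, hF, Tm_10]
    rw [e3]
  have hM₁pps : Tendsto (fun n => M₁ * pps (gB M₁ M₂ M₃) y n) atTop
      (𝓝 ((Ee m 1)ᵀ * L * Ee m 0)) := by
    have h := hodd 1
    rw [Tm_10] at h
    exact h.congr (fun n => by rw [hKK])
  have hM₁pps' : Tendsto (fun n => M₁ * pps (gB M₁ M₂ M₃) y n) atTop
      (𝓝 ((Ee m 2)ᵀ * L * Ee m 0)) := by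
    have h := hodd 2
    rw [Tm_20] at h
    exact h.congr (fun n => by rw [hKK])
  have hββ : (Ee m 1)ᵀ * L * Ee m 0 = (Ee m 2)ᵀ * L * Ee m 0 :=
    tendsto_nhds_unique hM₁pps hM₁pps'
  have hβ0 : (Ee m 1)ᵀ * L * Ee m 0 = 0 := by
    have hinf : {n | y n = true}.Infinite ∨ {n | y n = false}.Infinite := by
      by_contra hcon
      push_neg at hcon
      obtain ⟨h1, h2⟩ := hcon
      have huniv : (Set.univ : Set ℕ) = {n | y n = true} ∪ {n | y n = false} := by
        ext n; cases h : y n <;> simp [h]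
      exact Set.infinite_univ (α := ℕ) (by rw [huniv]; exact h1.union h2)
    rcases hinf with hinf | hinf
    · have h0 := heven 2
      have hfreq : ∃ᶠ n in atTop,
          Tm M₁ M₂ M₃ 2 (letter (y n)) * (M₁ * KK F σ (2 * n)) = 0 := by
        rw [Nat.frequently_atTop_iff_infinite]
        refine hinf.mono ?_
        intro n hn
        simp only [Set.mem_setOf_eq] at hn ⊢
        rw [hn, hlt, Tm_21, Matrix.zero_mul]
      have := tendsto_nhds_unique_of_frequently_eq h0 tendsto_const_nhds hfreq
      rw [hββ]; exact this
    · have h0 := heven 1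
      have hfreq : ∃ᶠ n in atTop,
          Tm M₁ M₂ M₃ 1 (letter (y n)) * (M₁ * KK F σ (2 * n)) = 0 := by
        rw [Nat.frequently_atTop_iff_infinite]
        refine hinf.mono ?_
        intro n hn
        simp only [Set.mem_setOf_eq] at hn ⊢
        rw [hn, hlf, Tm_12, Matrix.zero_mul]
      exact tendsto_nhds_unique_of_frequently_eq h0 tendsto_const_nhds hfreq
  rw [hβ0] at hM₁pps
  have hnorm : Tendsto (fun n => ‖M₁ * pps (gB M₁ M₂ M₃) y n‖) atTop (𝓝 0) :=
    tendsto_zero_iff_norm_tendsto_zero.1 hM₁pps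
  have hstep : ∀ n, ‖pps (gB M₁ M₂ M₃) y (n+1)‖ ≤
      ((m:ℝ) * max ‖M₂‖ ‖M₃‖) * ‖M₁ * pps (gB M₁ M₂ M₃) y n‖ := by
    intro n
    rw [pps_succ]
    cases hyn : y n
    · rw [show gB M₁ M₂ M₃ false = M₃ * M₁ from rfl, Matrix.mul_assoc]
      refine (norm_mul_le_card _ _).trans ?_
      rw [Fintype.card_fin]
      gcongr
      exact le_max_right _ _
    · rw [show gB M₁ M₂ M₃ true = M₂ * M₁ from rfl, Matrix.mul_assoc]
      refine (norm_mul_le_card _ _).trans ?_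
      rw [Fintype.card_fin]
      gcongr
      exact le_max_left _ _
  have hg : Tendsto (fun n => ((m:ℝ) * max ‖M₂‖ ‖M₃‖)
      * ‖M₁ * pps (gB M₁ M₂ M₃) y n‖) atTop (𝓝 0) := by
    have h := hnorm.const_mul ((m:ℝ) * max ‖M₂‖ ‖M₃‖)
    simpa using h
  have h1 : Tendsto (fun n => ‖pps (gB M₁ M₂ M₃) y (n+1)‖) atTop (𝓝 0) :=
    squeeze_zero (fun n => norm_nonneg _) hstep hg
  have h2 : Tendsto (fun n => pps (gB M₁ M₂ M₃) y (n+1)) atTop (𝓝 0) :=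
    tendsto_zero_iff_norm_tendsto_zero.2 h1
  exact (tendsto_add_atTop_iff_nat 1).1 h2

end Main

lemma ofFn_rev {α : Type*} : ∀ {k : ℕ} (f : Fin k → α),
    (List.ofFn f).reverse = List.ofFn (fun i => f i.rev) := by
  intro k
  induction k with
  | zero => intro f; simp
  | succ k ih =>
    intro f
    rw [List.ofFn_succ, List.reverse_cons, ih (fun i => f i.succ)]
    rw [List.ofFn_succ' (fun i : Fin (k+1) => f i.rev), List.concat_eq_append]
    congr 1
    · congr 1
      funext i
      show f (Fin.succ i.rev) = f ((Fin.castSucc i).rev)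
      congr 1
      ext
      simp only [Fin.val_succ, Fin.val_rev, Fin.coe_castSucc]
      omega
    · congr 2
      ext
      simp [Fin.val_rev]

lemma mp_ofFn_rev {W : Type*} [Fintype W] [DecidableEq W]
    (g : Bool → Matrix W W ℝ) {k : ℕ} (y : Fin k → Bool) :
    mp g ((List.ofFn y).reverse) = (List.ofFn (fun i => g (y i))).prod := by
  unfold mp
  rw [← List.map_reverse, List.reverse_reverse, List.map_ofFn]
  rfl

lemma rightProd_transpose {ι : Type*} [Fintype ι] [DecidableEq ι] {k : ℕ}
    (A : Fin k → Matrix ι ι ℝ) (j : ℕ → Fin k) :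
    ∀ n, rightProd A j n = (leftProd (fun x => (A x)ᵀ) j n)ᵀ := by
  intro n
  induction n with
  | zero => show (1 : Matrix ι ι ℝ) = 1ᵀ; rw [Matrix.transpose_one]
  | succ n ih =>
    show rightProd A j n * A (j n) = ((A (j n))ᵀ * leftProd (fun x => (A x)ᵀ) j n)ᵀ
    rw [Matrix.transpose_mul, Matrix.transpose_transpose, ih]

section MainTwo

variable {m : ℕ} (M₁ M₂ M₃ : Matrix (Fin m) (Fin m) ℝ)

/-- Forward direction -/
lemma forward_dir (hLCP : IsLCP ![blkA M₁, blkB M₂, blkC M₃]) :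
    ∃ C₀ : ℝ, 0 < C₀ ∧ ∃ q : ℝ, 0 ≤ q ∧ q < 1 ∧
      ∀ k : ℕ, 1 ≤ k → ∀ f : Fin k → Matrix (Fin m) (Fin m) ℝ,
        (∀ i, f i = M₂ * M₁ ∨ f i = M₃ * M₁) →
        ‖(List.ofFn f).prod‖ ≤ C₀ * q ^ k := by
  have H0 := lcp_implies_H0 M₁ M₂ M₃ hLCP
  have hc1 : (1:ℝ) ≤ (m:ℝ) + 1 := by
    have : (0:ℝ) ≤ (m:ℝ) := Nat.cast_nonneg m
    linarith
  have hcard : ((Fintype.card (Fin m) : ℕ) : ℝ) ≤ (m:ℝ) + 1 := by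
    rw [Fintype.card_fin]; linarith
  obtain ⟨C₀, hC₀, q, hq0, hq1, hb⟩ :=
    core_exp (gB M₁ M₂ M₃) (c := (m:ℝ) + 1) hc1 hcard H0
  refine ⟨C₀, hC₀, q, hq0, hq1, ?_⟩
  intro k hk f hf
  have hch : ∀ i, ∃ b : Bool, f i = gB M₁ M₂ M₃ b := by
    intro i
    rcases hf i with h | h
    · exact ⟨true, h⟩
    · exact ⟨false, h⟩
  choose y hy using hch
  have hbridge : (List.ofFn f).prod = mp (gB M₁ M₂ M₃) ((List.ofFn y).reverse) := by
    rw [mp_ofFn_rev]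
    have hfy : f = fun i => gB M₁ M₂ M₃ (y i) := funext hy
    rw [hfy]
  rw [hbridge]
  have hlen : ((List.ofFn y).reverse).length = k := by simp
  have := hb ((List.ofFn y).reverse) (by rw [hlen]; exact hk)
  rw [hlen] at this
  exact this

/-- Backward: LCP -/
lemma backward_lcp {C₀ q : ℝ} (hC₀ : 0 < C₀) (hq0 : 0 ≤ q) (hq1 : q < 1)
    (hb : ∀ k : ℕ, 1 ≤ k → ∀ f : Fin k → Matrix (Fin m) (Fin m) ℝ,
      (∀ i, f i = M₂ * M₁ ∨ f i = M₃ * M₁) →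
      ‖(List.ofFn f).prod‖ ≤ C₀ * q ^ k) :
    IsLCP ![blkA M₁, blkB M₂, blkC M₃] := by
  intro σ
  have hc1 : (1:ℝ) ≤ (m:ℝ) + 1 := by
    have : (0:ℝ) ≤ (m:ℝ) := Nat.cast_nonneg m
    linarith
  have hcard : ((Fintype.card (Fin m) : ℕ) : ℝ) ≤ (m:ℝ) + 1 := by
    rw [Fintype.card_fin]; linarith
  refine conv_abstract (Tm M₁ M₂ M₃) ![blkA M₁, blkB M₂, blkC M₃]
    (uu M₁ M₂ M₃) (fun x => (Ee m x)ᵀ)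
    (blk_eq_uu_mul M₁ M₂ M₃) (EeT_mul_uu M₁ M₂ M₃)
    (Tm_diag M₁ M₂ M₃) (Tm_12 M₁ M₂ M₃) (Tm_21 M₁ M₂ M₃)
    hc1 hcard (C₀ := C₀) (q := max q 2⁻¹) hC₀
    (lt_of_lt_of_le (by norm_num) (le_max_right _ _))
    (max_lt hq1 (by norm_num)) ?_ σ
  intro ℓ f hf hl
  rw [Tm_01, Tm_10, Tm_02, Tm_20] at hf
  refine (hb ℓ hl f hf).trans ?_
  have h1 : q ^ ℓ ≤ (max q 2⁻¹) ^ ℓ := by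
    refine pow_le_pow_left₀ hq0 (le_max_left _ _) ℓ
  nlinarith [pow_nonneg hq0 ℓ]

/-- Backward: RCP -/
lemma backward_rcp {C₀ q : ℝ} (hC₀ : 0 < C₀) (hq0 : 0 ≤ q) (hq1 : q < 1)
    (hb : ∀ k : ℕ, 1 ≤ k → ∀ f : Fin k → Matrix (Fin m) (Fin m) ℝ,
      (∀ i, f i = M₂ * M₁ ∨ f i = M₃ * M₁) →
      ‖(List.ofFn f).prod‖ ≤ C₀ * q ^ k) :
    IsRCP ![blkA M₁, blkB M₂, blkC M₃] := by
  intro σ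
  have hc1 : (1:ℝ) ≤ (m:ℝ) + 1 := by
    have : (0:ℝ) ≤ (m:ℝ) := Nat.cast_nonneg m
    linarith
  have hcard : ((Fintype.card (Fin m) : ℕ) : ℝ) ≤ (m:ℝ) + 1 := by
    rw [Fintype.card_fin]; linarith
  have hconv : ∃ L, Tendsto
      (leftProd (fun x => ((![blkA M₁, blkB M₂, blkC M₃] : Fin 3 → _) x)ᵀ) σ)
      atTop (𝓝 L) := by
    refine conv_abstract (fun a b => (Tm M₁ M₂ M₃ b a)ᵀ)
      (fun x => ((![blkA M₁, blkB M₂, blkC M₃] : Fin 3 → _) x)ᵀ)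
      (fun x => Ee m x) (fun x => (uu M₁ M₂ M₃ x)ᵀ)
      ?_ ?_ ?_ ?_ ?_ hc1 hcard (C₀ := C₀) (q := max q 2⁻¹) hC₀
      (lt_of_lt_of_le (by norm_num) (le_max_right _ _))
      (max_lt hq1 (by norm_num)) ?_ σ
    · intro x
      show ((![blkA M₁, blkB M₂, blkC M₃] : Fin 3 → _) x)ᵀ = Ee m x * (uu M₁ M₂ M₃ x)ᵀ
      rw [blk_eq_uu_mul M₁ M₂ M₃ x, Matrix.transpose_mul, Matrix.transpose_transpose]
    · intro a b
      show (uu M₁ M₂ M₃ a)ᵀ * Ee m b = (Tm M₁ M₂ M₃ b a)ᵀ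
      rw [← EeT_mul_uu M₁ M₂ M₃ b a, Matrix.transpose_mul, Matrix.transpose_transpose]
    · intro x
      show (Tm M₁ M₂ M₃ x x)ᵀ = 1
      rw [Tm_diag, Matrix.transpose_one]
    · show (Tm M₁ M₂ M₃ 2 1)ᵀ = 0
      rw [Tm_21, Matrix.transpose_zero]
    · show (Tm M₁ M₂ M₃ 1 2)ᵀ = 0
      rw [Tm_12, Matrix.transpose_zero]
    · -- mixed bound for the transposed factors
      intro ℓ f hf hl
      rw [Tm_10, Tm_01, Tm_20, Tm_02] at hf
      have hf2 : ∀ i, f i = (M₂ * M₁)ᵀ ∨ f i = (M₃ * M₁)ᵀ := by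
        intro i
        rcases hf i with h | h
        · left; rw [h, Matrix.transpose_mul]
        · right; rw [h, Matrix.transpose_mul]
      set f' : Fin ℓ → Matrix (Fin m) (Fin m) ℝ := fun i => (f i.rev)ᵀ with hf'
      have hf'mem : ∀ i, f' i = M₂ * M₁ ∨ f' i = M₃ * M₁ := by
        intro i
        rcases hf2 i.rev with h | h
        · left
          show (f i.rev)ᵀ = _
          rw [h, Matrix.transpose_transpose]
        · right
          show (f i.rev)ᵀ = _
          rw [h, Matrix.transpose_transpose]
      have hprod : (List.ofFn f).prod = ((List.ofFn f').prod)ᵀ := by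
        rw [Matrix.transpose_list_prod, List.map_ofFn]
        have e1 : (Matrix.transpose ∘ f') = (fun i => f i.rev) := by
          funext i
          simp [hf', Matrix.transpose_transpose]
        rw [e1, ofFn_rev]
        have e2 : (fun i : Fin ℓ => f i.rev.rev) = f := funext fun i => by rw [Fin.rev_rev]
        rw [e2]
      rw [hprod, Matrix.norm_transpose]
      refine (hb ℓ hl f' hf'mem).trans ?_
      have h1 : q ^ ℓ ≤ (max q 2⁻¹) ^ ℓ :=
        pow_le_pow_left₀ hq0 (le_max_left _ _) ℓ
      nlinarith [pow_nonneg hq0 ℓ]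
  obtain ⟨L, hL⟩ := hconv
  refine ⟨Lᵀ, ?_⟩
  have hcontT : Continuous (fun M : Matrix (Fin 3 × Fin m) (Fin 3 × Fin m) ℝ => Mᵀ) :=
    continuous_id.matrix_transpose
  have h2 := (hcontT.tendsto L).comp hL
  refine h2.congr ?_
  intro n
  simp only [Function.comp]
  rw [rightProd_transpose]

end MainTwo

section TV

variable {m : ℕ} (M₁ M₂ M₃ : Matrix (Fin m) (Fin m) ℝ)

lemma blkA_mulVec (v : Fin 3 × Fin m → ℝ) (a : Fin 3) (i : Fin m) :
    (blkA M₁).mulVec v (a, i)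
      = if a = 0 then v (0, i) else M₁.mulVec (fun t => v (0, t)) i := by
  simp only [Matrix.mulVec, dotProduct, blkA, Fintype.sum_prod_type]
  rw [Fin.sum_univ_three]
  simp only [show ((0:Fin 3) = 0) = True by simp, show ((1:Fin 3) = 0) = False by simp,
    show ((2:Fin 3) = 0) = False by simp, if_true, if_false, zero_mul,
    Finset.sum_const_zero, add_zero]
  by_cases ha : a = 0
  · simp only [ha, if_true, Matrix.one_apply, ite_mul, one_mul, zero_mul]
    rw [Finset.sum_ite_eq]
    simp
  · simp only [ha, if_false, Matrix.mulVec, dotProduct]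

lemma blkB_mulVec (v : Fin 3 × Fin m → ℝ) (a : Fin 3) (i : Fin m) :
    (blkB M₂).mulVec v (a, i)
      = if a = 0 then M₂.mulVec (fun t => v (1, t)) i
        else if a = 1 then v (1, i) else 0 := by
  simp only [Matrix.mulVec, dotProduct, blkB, Fintype.sum_prod_type]
  rw [Fin.sum_univ_three]
  simp only [show ((0:Fin 3) = 1) = False by simp, show ((1:Fin 3) = 1) = True by simp,
    show ((2:Fin 3) = 1) = False by simp, if_true, if_false, zero_mul,
    Finset.sum_const_zero, add_zero, zero_add]
  by_cases ha : a = 0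
  · simp only [ha, if_true, show ((0:Fin 3) = 1) = False by simp, if_false]
  · simp only [ha, if_false]
    by_cases ha1 : a = 1
    · simp only [ha1, if_true, Matrix.one_apply, ite_mul, one_mul, zero_mul]
      rw [Finset.sum_ite_eq]
      simp
    · simp only [ha1, if_false, zero_mul, Finset.sum_const_zero]

lemma blkC_mulVec (v : Fin 3 × Fin m → ℝ) (a : Fin 3) (i : Fin m) :
    (blkC M₃).mulVec v (a, i)
      = if a = 0 then M₃.mulVec (fun t => v (2, t)) i
        else if a = 2 then v (2, i) else 0 := by
  simp only [Matrix.mulVec, dotProduct, blkC, Fintype.sum_prod_type]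
  rw [Fin.sum_univ_three]
  simp only [show ((0:Fin 3) = 2) = False by simp, show ((1:Fin 3) = 2) = False by simp,
    show ((2:Fin 3) = 2) = True by simp, if_true, if_false, zero_mul,
    Finset.sum_const_zero, add_zero, zero_add]
  by_cases ha : a = 0
  · simp only [ha, if_true, show ((0:Fin 3) = 2) = False by simp, if_false]
  · simp only [ha, if_false]
    by_cases ha2 : a = 2
    · simp only [ha2, if_true, show ((2:Fin 3) = 0) = False by simp,
        show ((2:Fin 3) = 2) = True by simp, if_false, if_true,
        Matrix.one_apply, ite_mul, one_mul, zero_mul]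
      rw [Finset.sum_ite_eq]
      simp
    · simp only [ha2, if_false]
      have h0 : (a = 0) = False := by simp [ha]
      simp only [h0, if_false, zero_mul, Finset.sum_const_zero]

lemma mem_ker_iff' (X : Matrix (Fin 3 × Fin m) (Fin 3 × Fin m) ℝ)
    (v : Fin 3 × Fin m → ℝ) :
    v ∈ LinearMap.ker (Matrix.mulVecLin (1 - X)) ↔ X.mulVec v = v := by
  rw [LinearMap.mem_ker, Matrix.mulVecLin_apply, Matrix.sub_mulVec,
    Matrix.one_mulVec, sub_eq_zero]
  exact eq_comm

lemma kerA_iff (v : Fin 3 × Fin m → ℝ) :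
    v ∈ LinearMap.ker (Matrix.mulVecLin (1 - blkA M₁)) ↔
      (∀ i, v (1, i) = M₁.mulVec (fun t => v (0, t)) i) ∧
      (∀ i, v (2, i) = M₁.mulVec (fun t => v (0, t)) i) := by
  rw [mem_ker_iff']
  constructor
  · intro h
    constructor <;> intro i
    · have h1 := congrFun h (1, i)
      rw [blkA_mulVec] at h1
      simpa using h1.symm
    · have h1 := congrFun h (2, i)
      rw [blkA_mulVec] at h1
      simpa using h1.symm
  · rintro ⟨h1, h2⟩
    funext p
    obtain ⟨a, i⟩ := p
    rw [blkA_mulVec]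
    fin_cases a
    · simp
    · simpa using (h1 i).symm
    · simpa using (h2 i).symm

lemma kerB_iff (v : Fin 3 × Fin m → ℝ) :
    v ∈ LinearMap.ker (Matrix.mulVecLin (1 - blkB M₂)) ↔
      (∀ i, v (0, i) = M₂.mulVec (fun t => v (1, t)) i) ∧
      (∀ i, v (2, i) = 0) := by
  rw [mem_ker_iff']
  constructor
  · intro h
    constructor <;> intro i
    · have h1 := congrFun h (0, i)
      rw [blkB_mulVec] at h1
      simpa using h1.symm
    · have h1 := congrFun h (2, i)
      rw [blkB_mulVec] at h1
      simpa using h1.symm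
  · rintro ⟨h1, h2⟩
    funext p
    obtain ⟨a, i⟩ := p
    rw [blkB_mulVec]
    fin_cases a
    · simpa using (h1 i).symm
    · simp
    · simpa using (h2 i).symm

lemma kerC_iff (v : Fin 3 × Fin m → ℝ) :
    v ∈ LinearMap.ker (Matrix.mulVecLin (1 - blkC M₃)) ↔
      (∀ i, v (0, i) = M₃.mulVec (fun t => v (2, t)) i) ∧
      (∀ i, v (1, i) = 0) := by
  rw [mem_ker_iff']
  constructor
  · intro h
    constructor <;> intro i
    · have h1 := congrFun h (0, i)
      rw [blkC_mulVec] at h1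
      simpa using h1.symm
    · have h1 := congrFun h (1, i)
      rw [blkC_mulVec] at h1
      simpa using h1.symm
  · rintro ⟨h1, h2⟩
    funext p
    obtain ⟨a, i⟩ := p
    rw [blkC_mulVec]
    fin_cases a
    · simpa using (h1 i).symm
    · simpa using (h2 i).symm
    · simp

lemma rangeA_iff (v : Fin 3 × Fin m → ℝ) :
    v ∈ LinearMap.range (Matrix.mulVecLin (1 - blkA M₁)) ↔ ∀ i, v (0, i) = 0 := by
  constructor
  · rintro ⟨w, rfl⟩ i
    rw [Matrix.mulVecLin_apply, Matrix.sub_mulVec, Matrix.one_mulVec]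
    show w (0, i) - (blkA M₁).mulVec w (0, i) = 0
    rw [blkA_mulVec]
    simp
  · intro h
    refine ⟨(fun p => if p.1 = 0 then 0 else v p), ?_⟩
    rw [Matrix.mulVecLin_apply, Matrix.sub_mulVec, Matrix.one_mulVec]
    funext p
    obtain ⟨a, i⟩ := p
    show (if a = 0 then (0:ℝ) else v (a, i))
      - (blkA M₁).mulVec (fun p => if p.1 = 0 then 0 else v p) (a, i) = v (a, i)
    rw [blkA_mulVec]
    have hz : (fun t => if ((0:Fin 3), t).1 = 0 then (0:ℝ) else v (0, t))
        = (0 : Fin m → ℝ) := by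
      funext t; simp
    fin_cases a
    · simpa using (h i).symm
    · simp only [show ((1:Fin 3) = 0) = False by simp, if_false, if_true]
      rw [show (fun t : Fin m => (0:ℝ)) = (0 : Fin m → ℝ) from rfl, Matrix.mulVec_zero]
      simp
    · simp only [show ((2:Fin 3) = 0) = False by simp, if_false, if_true]
      rw [show (fun t : Fin m => (0:ℝ)) = (0 : Fin m → ℝ) from rfl, Matrix.mulVec_zero]
      simp

lemma rangeB_iff (v : Fin 3 × Fin m → ℝ) :
    v ∈ LinearMap.range (Matrix.mulVecLin (1 - blkB M₂)) ↔ ∀ i, v (1, i) = 0 := by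
  constructor
  · rintro ⟨w, rfl⟩ i
    rw [Matrix.mulVecLin_apply, Matrix.sub_mulVec, Matrix.one_mulVec]
    show w (1, i) - (blkB M₂).mulVec w (1, i) = 0
    rw [blkB_mulVec]
    simp
  · intro h
    refine ⟨(fun p => if p.1 = 1 then 0 else v p), ?_⟩
    rw [Matrix.mulVecLin_apply, Matrix.sub_mulVec, Matrix.one_mulVec]
    funext p
    obtain ⟨a, i⟩ := p
    show (if a = 1 then (0:ℝ) else v (a, i))
      - (blkB M₂).mulVec (fun p => if p.1 = 1 then 0 else v p) (a, i) = v (a, i)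
    rw [blkB_mulVec]
    have hz : (fun t => if ((1:Fin 3), t).1 = 1 then (0:ℝ) else v (1, t))
        = (0 : Fin m → ℝ) := by
      funext t; simp
    fin_cases a
    · simp only [show ((0:Fin 3) = 1) = False by simp, if_false,
        show ((0:Fin 3) = 0) = True by simp, if_true]
      rw [show (fun t : Fin m => (0:ℝ)) = (0 : Fin m → ℝ) from rfl, Matrix.mulVec_zero]
      simp
    · simpa using (h i).symm
    · simp only [show ((2:Fin 3) = 1) = False by simp, if_false,
        show ((2:Fin 3) = 0) = False by simp]
      simp

lemma rangeC_iff (v : Fin 3 × Fin m → ℝ) :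
    v ∈ LinearMap.range (Matrix.mulVecLin (1 - blkC M₃)) ↔ ∀ i, v (2, i) = 0 := by
  constructor
  · rintro ⟨w, rfl⟩ i
    rw [Matrix.mulVecLin_apply, Matrix.sub_mulVec, Matrix.one_mulVec]
    show w (2, i) - (blkC M₃).mulVec w (2, i) = 0
    rw [blkC_mulVec]
    simp
  · intro h
    refine ⟨(fun p => if p.1 = 2 then 0 else v p), ?_⟩
    rw [Matrix.mulVecLin_apply, Matrix.sub_mulVec, Matrix.one_mulVec]
    funext p
    obtain ⟨a, i⟩ := p
    show (if a = 2 then (0:ℝ) else v (a, i))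
      - (blkC M₃).mulVec (fun p => if p.1 = 2 then 0 else v p) (a, i) = v (a, i)
    rw [blkC_mulVec]
    have hz : (fun t => if ((2:Fin 3), t).1 = 2 then (0:ℝ) else v (2, t))
        = (0 : Fin m → ℝ) := by
      funext t; simp
    fin_cases a
    · simp only [show ((0:Fin 3) = 2) = False by simp, if_false,
        show ((0:Fin 3) = 0) = True by simp, if_true]
      rw [show (fun t : Fin m => (0:ℝ)) = (0 : Fin m → ℝ) from rfl, Matrix.mulVec_zero]
      simp
    · simp only [show ((1:Fin 3) = 2) = False by simp, if_false,
        show ((1:Fin 3) = 0) = False by simp]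
      simp
    · simpa using (h i).symm

lemma transversal : IsTransversal ![blkA M₁, blkB M₂, blkC M₃] := by
  intro J'
  classical
  set A : Fin 3 → Matrix (Fin 3 × Fin m) (Fin 3 × Fin m) ℝ :=
    ![blkA M₁, blkB M₂, blkC M₃] with hA
  have hA0 : A 0 = blkA M₁ := rfl
  have hA1 : A 1 = blkB M₂ := rfl
  have hA2 : A 2 = blkC M₃ := rfl
  have hNmem : ∀ v, v ∈ Nspace A J' ↔
      ∀ j ∈ J', v ∈ LinearMap.ker (Matrix.mulVecLin (1 - A j)) := by
    intro v
    simp [Nspace, Submodule.mem_iInf]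
  have hRle : ∀ (S : Submodule ℝ (Fin 3 × Fin m → ℝ)),
      (∀ j ∈ J', LinearMap.range (Matrix.mulVecLin (1 - A j)) ≤ S) →
      Rspace A J' ≤ S := by
    intro S h
    exact iSup₂_le h
  have hRmem : ∀ j ∈ J', ∀ w, w ∈ LinearMap.range (Matrix.mulVecLin (1 - A j)) →
      w ∈ Rspace A J' := by
    intro j hj w hw
    exact (le_iSup₂ (f := fun j (_ : j ∈ J') =>
      LinearMap.range (Matrix.mulVecLin (1 - A j))) j hj) hw
  constructor
  · -- N ⊓ R = ⊥
    rw [eq_bot_iff]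
    intro v hv
    obtain ⟨hvN, hvR⟩ := Submodule.mem_inf.1 hv
    rw [Submodule.mem_bot]
    by_cases h0 : (0 : Fin 3) ∈ J' <;> by_cases h1 : (1 : Fin 3) ∈ J' <;>
      by_cases h2 : (2 : Fin 3) ∈ J'
    · -- 0,1,2 ∈ J'
      have hkB := (kerB_iff M₂ v).1 (((hNmem v).1 hvN) 1 h1)
      have hkC := (kerC_iff M₃ v).1 (((hNmem v).1 hvN) 2 h2)
      funext p; obtain ⟨a, i⟩ := p
      have hv1 : ∀ i, v (1, i) = 0 := hkC.2
      have hv2 : ∀ i, v (2, i) = 0 := hkB.2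
      have hv0 : ∀ i, v (0, i) = 0 := by
        intro i
        rw [hkB.1 i, show (fun t => v (1, t)) = (0 : Fin m → ℝ) from funext hv1,
          Matrix.mulVec_zero]
        rfl
      fin_cases a
      · exact hv0 i
      · exact hv1 i
      · exact hv2 i
    · -- 0,1 ∈ J', 2 ∉
      have hkA := (kerA_iff M₁ v).1 (((hNmem v).1 hvN) 0 h0)
      have hkB := (kerB_iff M₂ v).1 (((hNmem v).1 hvN) 1 h1)
      funext p; obtain ⟨a, i⟩ := p
      have hv2 : ∀ i, v (2, i) = 0 := hkB.2
      have hM₁v0 : ∀ i, M₁.mulVec (fun t => v (0, t)) i = 0 := by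
        intro i; rw [← hkA.2 i]; exact hv2 i
      have hv1 : ∀ i, v (1, i) = 0 := by
        intro i; rw [hkA.1 i]; exact hM₁v0 i
      have hv0 : ∀ i, v (0, i) = 0 := by
        intro i
        rw [hkB.1 i, show (fun t => v (1, t)) = (0 : Fin m → ℝ) from funext hv1,
          Matrix.mulVec_zero]
        rfl
      fin_cases a
      · exact hv0 i
      · exact hv1 i
      · exact hv2 i
    · -- 0,2 ∈ J', 1 ∉
      have hkA := (kerA_iff M₁ v).1 (((hNmem v).1 hvN) 0 h0)
      have hkC := (kerC_iff M₃ v).1 (((hNmem v).1 hvN) 2 h2)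
      funext p; obtain ⟨a, i⟩ := p
      have hv1 : ∀ i, v (1, i) = 0 := hkC.2
      have hM₁v0 : ∀ i, M₁.mulVec (fun t => v (0, t)) i = 0 := by
        intro i; rw [← hkA.1 i]; exact hv1 i
      have hv2 : ∀ i, v (2, i) = 0 := by
        intro i; rw [hkA.2 i]; exact hM₁v0 i
      have hv0 : ∀ i, v (0, i) = 0 := by
        intro i
        rw [hkC.1 i, show (fun t => v (2, t)) = (0 : Fin m → ℝ) from funext hv2,
          Matrix.mulVec_zero]
        rfl
      fin_cases a
      · exact hv0 i
      · exact hv1 i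
      · exact hv2 i
    · -- only 0 ∈ J'
      have hkA := (kerA_iff M₁ v).1 (((hNmem v).1 hvN) 0 h0)
      have hvR0 : ∀ i, v (0, i) = 0 := by
        have hle : Rspace A J' ≤ LinearMap.range (Matrix.mulVecLin (1 - blkA M₁)) := by
          refine hRle _ ?_
          intro j hj
          rcases fin3_cases j with hh | hh | hh
          · subst hh; rw [hA0]
          · subst hh; exact absurd hj h1
          · subst hh; exact absurd hj h2
        exact (rangeA_iff M₁ v).1 (hle hvR)
      have hv0 := hvR0
      have hv1 : ∀ i, v (1, i) = 0 := by
        intro i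
        rw [hkA.1 i, show (fun t => v (0, t)) = (0 : Fin m → ℝ) from funext hv0,
          Matrix.mulVec_zero]
        rfl
      have hv2 : ∀ i, v (2, i) = 0 := by
        intro i
        rw [hkA.2 i, show (fun t => v (0, t)) = (0 : Fin m → ℝ) from funext hv0,
          Matrix.mulVec_zero]
        rfl
      funext p; obtain ⟨a, i⟩ := p
      fin_cases a
      · exact hv0 i
      · exact hv1 i
      · exact hv2 i
    · -- 1,2 ∈ J', 0 ∉
      have hkB := (kerB_iff M₂ v).1 (((hNmem v).1 hvN) 1 h1)
      have hkC := (kerC_iff M₃ v).1 (((hNmem v).1 hvN) 2 h2)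
      funext p; obtain ⟨a, i⟩ := p
      have hv1 : ∀ i, v (1, i) = 0 := hkC.2
      have hv2 : ∀ i, v (2, i) = 0 := hkB.2
      have hv0 : ∀ i, v (0, i) = 0 := by
        intro i
        rw [hkB.1 i, show (fun t => v (1, t)) = (0 : Fin m → ℝ) from funext hv1,
          Matrix.mulVec_zero]
        rfl
      fin_cases a
      · exact hv0 i
      · exact hv1 i
      · exact hv2 i
    · -- only 1 ∈ J'
      have hkB := (kerB_iff M₂ v).1 (((hNmem v).1 hvN) 1 h1)
      have hv1 : ∀ i, v (1, i) = 0 := by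
        have hle : Rspace A J' ≤ LinearMap.range (Matrix.mulVecLin (1 - blkB M₂)) := by
          refine hRle _ ?_
          intro j hj
          rcases fin3_cases j with hh | hh | hh
          · subst hh; exact absurd hj h0
          · subst hh; rw [hA1]
          · subst hh; exact absurd hj h2
        exact (rangeB_iff M₂ v).1 (hle hvR)
      have hv2 : ∀ i, v (2, i) = 0 := hkB.2
      have hv0 : ∀ i, v (0, i) = 0 := by
        intro i
        rw [hkB.1 i, show (fun t => v (1, t)) = (0 : Fin m → ℝ) from funext hv1,
          Matrix.mulVec_zero]
        rfl
      funext p; obtain ⟨a, i⟩ := p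
      fin_cases a
      · exact hv0 i
      · exact hv1 i
      · exact hv2 i
    · -- only 2 ∈ J'
      have hkC := (kerC_iff M₃ v).1 (((hNmem v).1 hvN) 2 h2)
      have hv2 : ∀ i, v (2, i) = 0 := by
        have hle : Rspace A J' ≤ LinearMap.range (Matrix.mulVecLin (1 - blkC M₃)) := by
          refine hRle _ ?_
          intro j hj
          rcases fin3_cases j with hh | hh | hh
          · subst hh; exact absurd hj h0
          · subst hh; exact absurd hj h1
          · subst hh; rw [hA2]
        exact (rangeC_iff M₃ v).1 (hle hvR)
      have hv1 : ∀ i, v (1, i) = 0 := hkC.2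
      have hv0 : ∀ i, v (0, i) = 0 := by
        intro i
        rw [hkC.1 i, show (fun t => v (2, t)) = (0 : Fin m → ℝ) from funext hv2,
          Matrix.mulVec_zero]
        rfl
      funext p; obtain ⟨a, i⟩ := p
      fin_cases a
      · exact hv0 i
      · exact hv1 i
      · exact hv2 i
    · -- J' empty
      have hle : Rspace A J' ≤ ⊥ := by
        refine hRle _ ?_
        intro j hj
        rcases fin3_cases j with hh | hh | hh
        · subst hh; exact absurd hj h0
        · subst hh; exact absurd hj h1
        · subst hh; exact absurd hj h2
      have := hle hvR
      simpa using this
  · -- N ⊔ R = ⊤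
    rw [eq_top_iff]
    intro v _
    by_cases h0 : (0 : Fin 3) ∈ J' <;> by_cases h1 : (1 : Fin 3) ∈ J' <;>
      by_cases h2 : (2 : Fin 3) ∈ J'
    · -- 0,1,2
      refine Submodule.mem_sup_right ?_
      have hr1 : (fun p : Fin 3 × Fin m => if p.1 = 0 then 0 else v p) ∈ Rspace A J' := by
        refine hRmem 0 h0 _ ?_
        rw [hA0, rangeA_iff]
        intro i; simp
      have hr2 : (fun p : Fin 3 × Fin m => if p.1 = 0 then v p else 0) ∈ Rspace A J' := by
        refine hRmem 1 h1 _ ?_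
        rw [hA1, rangeB_iff]
        intro i; simp
      have := Submodule.add_mem _ hr1 hr2
      convert this using 1
      funext p
      show v p = _
      by_cases hp : p.1 = 0 <;> simp [hp]
    · -- 0,1
      refine Submodule.mem_sup_right ?_
      have hr1 : (fun p : Fin 3 × Fin m => if p.1 = 0 then 0 else v p) ∈ Rspace A J' := by
        refine hRmem 0 h0 _ ?_
        rw [hA0, rangeA_iff]
        intro i; simp
      have hr2 : (fun p : Fin 3 × Fin m => if p.1 = 0 then v p else 0) ∈ Rspace A J' := by
        refine hRmem 1 h1 _ ?_
        rw [hA1, rangeB_iff]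
        intro i; simp
      have := Submodule.add_mem _ hr1 hr2
      convert this using 1
      funext p
      show v p = _
      by_cases hp : p.1 = 0 <;> simp [hp]
    · -- 0,2
      refine Submodule.mem_sup_right ?_
      have hr1 : (fun p : Fin 3 × Fin m => if p.1 = 0 then 0 else v p) ∈ Rspace A J' := by
        refine hRmem 0 h0 _ ?_
        rw [hA0, rangeA_iff]
        intro i; simp
      have hr2 : (fun p : Fin 3 × Fin m => if p.1 = 0 then v p else 0) ∈ Rspace A J' := by
        refine hRmem 2 h2 _ ?_
        rw [hA2, rangeC_iff]
        intro i; simp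
      have := Submodule.add_mem _ hr1 hr2
      convert this using 1
      funext p
      show v p = _
      by_cases hp : p.1 = 0 <;> simp [hp]
    · -- only 0
      rw [Submodule.mem_sup]
      refine ⟨(fun p => if p.1 = 0 then v (0, p.2)
        else M₁.mulVec (fun t => v (0, t)) p.2), ?_,
        (fun p => if p.1 = 0 then 0 else v p - M₁.mulVec (fun t => v (0, t)) p.2), ?_, ?_⟩
      · rw [hNmem]
        intro j hj
        rcases fin3_cases j with hh | hh | hh
        · subst hh
          rw [hA0, kerA_iff]
          constructor <;> intro i <;> simp
        · subst hh; exact absurd hj h1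
        · subst hh; exact absurd hj h2
      · refine hRmem 0 h0 _ ?_
        rw [hA0, rangeA_iff]
        intro i; simp
      · funext p
        obtain ⟨a, i⟩ := p
        show (if a = 0 then v (0, i) else M₁.mulVec (fun t => v (0, t)) i)
          + (if a = 0 then 0 else v (a, i) - M₁.mulVec (fun t => v (0, t)) i) = v (a, i)
        by_cases hp : a = 0
        · subst hp; simp
        · simp [hp]
    · -- 1,2
      refine Submodule.mem_sup_right ?_
      have hr1 : (fun p : Fin 3 × Fin m => if p.1 = 1 then 0 else v p) ∈ Rspace A J' := by
        refine hRmem 1 h1 _ ?_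
        rw [hA1, rangeB_iff]
        intro i; simp
      have hr2 : (fun p : Fin 3 × Fin m => if p.1 = 1 then v p else 0) ∈ Rspace A J' := by
        refine hRmem 2 h2 _ ?_
        rw [hA2, rangeC_iff]
        intro i; simp
      have := Submodule.add_mem _ hr1 hr2
      convert this using 1
      funext p
      show v p = _
      by_cases hp : p.1 = 1 <;> simp [hp]
    · -- only 1
      rw [Submodule.mem_sup]
      refine ⟨(fun p => if p.1 = 0 then M₂.mulVec (fun t => v (1, t)) p.2
        else if p.1 = 1 then v (1, p.2) else 0), ?_,
        (fun p => if p.1 = 0 then v p - M₂.mulVec (fun t => v (1, t)) p.2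
        else if p.1 = 1 then 0 else v p), ?_, ?_⟩
      · rw [hNmem]
        intro j hj
        rcases fin3_cases j with hh | hh | hh
        · subst hh; exact absurd hj h0
        · subst hh
          rw [hA1, kerB_iff]
          constructor <;> intro i <;> simp
        · subst hh; exact absurd hj h2
      · refine hRmem 1 h1 _ ?_
        rw [hA1, rangeB_iff]
        intro i; simp
      · funext p
        obtain ⟨a, i⟩ := p
        show (if a = 0 then M₂.mulVec (fun t => v (1, t)) i
            else if a = 1 then v (1, i) else 0)
          + (if a = 0 then v (a, i) - M₂.mulVec (fun t => v (1, t)) i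
            else if a = 1 then 0 else v (a, i)) = v (a, i)
        fin_cases a <;> simp
    · -- only 2
      rw [Submodule.mem_sup]
      refine ⟨(fun p => if p.1 = 0 then M₃.mulVec (fun t => v (2, t)) p.2
        else if p.1 = 2 then v (2, p.2) else 0), ?_,
        (fun p => if p.1 = 0 then v p - M₃.mulVec (fun t => v (2, t)) p.2
        else if p.1 = 2 then 0 else v p), ?_, ?_⟩
      · rw [hNmem]
        intro j hj
        rcases fin3_cases j with hh | hh | hh
        · subst hh; exact absurd hj h0
        · subst hh; exact absurd hj h1
        · subst hh
          rw [hA2, kerC_iff]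
          constructor <;> intro i <;> simp
      · refine hRmem 2 h2 _ ?_
        rw [hA2, rangeC_iff]
        intro i; simp
      · funext p
        obtain ⟨a, i⟩ := p
        show (if a = 0 then M₃.mulVec (fun t => v (2, t)) i
            else if a = 2 then v (2, i) else 0)
          + (if a = 0 then v (a, i) - M₃.mulVec (fun t => v (2, t)) i
            else if a = 2 then 0 else v (a, i)) = v (a, i)
        fin_cases a <;> simp
    · -- empty
      refine Submodule.mem_sup_left ?_
      rw [hNmem]
      intro j hj
      rcases fin3_cases j with hh | hh | hh
      · subst hh; exact absurd hj h0
      · subst hh; exact absurd hj h1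
      · subst hh; exact absurd hj h2

end TV

end BlockCP

/-- `Σ = {A, B, C}` (the block matrices built from `M₁, M₂, M₃`)
is LCP, RCP and transversal iff the pair `{M₂M₁, M₃M₁}` is asymptotically
stable: products of `k` factors, each equal to `M₂M₁` or `M₃M₁`, are bounded in
norm by `C₀ qᵏ` with `q < 1`. -/
theorem block_family_cp_iff {m : ℕ}
    (M₁ M₂ M₃ : Matrix (Fin m) (Fin m) ℝ) :
    (IsLCP ![blkA M₁, blkB M₂, blkC M₃] ∧ IsRCP ![blkA M₁, blkB M₂, blkC M₃] ∧
        IsTransversal ![blkA M₁, blkB M₂, blkC M₃]) ↔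
      ∃ C₀ : ℝ, 0 < C₀ ∧ ∃ q : ℝ, 0 ≤ q ∧ q < 1 ∧
        ∀ k : ℕ, 1 ≤ k → ∀ f : Fin k → Matrix (Fin m) (Fin m) ℝ,
          (∀ i, f i = M₂ * M₁ ∨ f i = M₃ * M₁) →
          ‖(List.ofFn f).prod‖ ≤ C₀ * q ^ k := by
  constructor
  · rintro ⟨hLCP, _, _⟩
    exact BlockCP.forward_dir M₁ M₂ M₃ hLCP
  · rintro ⟨C₀, hC₀, q, hq0, hq1, hb⟩
    exact ⟨BlockCP.backward_lcp M₁ M₂ M₃ hC₀ hq0 hq1 hb,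
      BlockCP.backward_rcp M₁ M₂ M₃ hC₀ hq0 hq1 hb,
      BlockCP.transversal M₁ M₂ M₃⟩
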